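/- arXiv:1812.10182 — 6 statements merged into one kernel-verified Lean document; each statement's English description precedes it below -/
import Mathlib

section
/- Yau's inequality: let (μ_t)_{t≥0} be a differentiable-in-t family of probability measures on X_N solving the Kolmogorov forward equation for L_N, i.e. (d/dt) Σ_η f(η) μ_t(η) = Σ_η (L_N f)(η) μ_t(η) for every function f on X_N, let m be a probability measure on X_N with full support, and let (ν_t)_{t≥0} be a family of full-support probability measures on X_N, differentiable in t, with ψ_t(η) := ν_t(η)/m(η). Assume μ_t has a density f_t := dμ_t/dν_t with respect to ν_t. Then for every t, (d/dt) H(μ_t|ν_t) ≤ − D_N(√(f_t); ν_t) + Σ_η ( (L_N^{*,ν_t} 1)(η) − ∂_t log ψ_t(η) ) μ_t(η), where 1 is the constant function 1 and L_N^{*,ν_t} is the adjoint of L_N in L²(ν_t). -/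
open Finset

/-- The discrete torus `T_N^d = (ℤ/Nℤ)^d`. -/
abbrev Torus (d N : ℕ) := Fin d → ZMod N

/-- The configuration space `X_N = {0,1}^{T_N^d}`. -/
abbrev Config (d N : ℕ) := Torus d N → Bool

/-- The `i`-th unit vector `e_i` of the discrete torus. -/
def uvec (d N : ℕ) (i : Fin d) : Torus d N := fun j => if j = i then 1 else 0

/-- `swapC x y η = η^{x,y}`, the configuration with the values at `x` and `y` exchanged. -/
def swapC {d N : ℕ} (x y : Torus d N) (η : Config d N) : Config d N :=
  fun z => η (Equiv.swap x y z)

/-- `flipC x η = η^x`, the configuration with the value at `x` flipped. -/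
def flipC {d N : ℕ} (x : Torus d N) (η : Config d N) : Config d N :=
  Function.update η x (!(η x))

/-- The Kawasaki generator `L_K f (η) = (1/2) Σ_{x,y:|x-y|=1} (f(η^{x,y}) - f(η))`,
the sum over ordered nearest-neighbour pairs being realized as the sum over `x` and
over the two directions `± e_i`. -/
noncomputable def kawasaki {d N : ℕ} [NeZero N] (f : Config d N → ℝ) (η : Config d N) : ℝ :=
  (1/2) * ∑ x : Torus d N, ∑ i : Fin d,
    ((f (swapC x (x + uvec d N i) η) - f η) + (f (swapC x (x - uvec d N i) η) - f η))

/-- The Glauber generator `L_G f (η) = Σ_x c_x(η) (f(η^x) - f(η))`. -/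
noncomputable def glauber {d N : ℕ} [NeZero N] (c : Torus d N → Config d N → ℝ)
    (f : Config d N → ℝ) (η : Config d N) : ℝ :=
  ∑ x : Torus d N, c x η * (f (flipC x η) - f η)

/-- The full generator `L_N = N² L_K + K L_G`. -/
noncomputable def genLN {d N : ℕ} [NeZero N] (K : ℝ) (c : Torus d N → Config d N → ℝ)
    (f : Config d N → ℝ) (η : Config d N) : ℝ :=
  (N:ℝ)^2 * kawasaki f η + K * glauber c f η

/-- The Kawasaki Dirichlet form `D_K(f;ν) = (1/4) Σ_{x,y:|x-y|=1} ∫ (f(η^{x,y}) - f(η))² dν`. -/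
noncomputable def dirK {d N : ℕ} [NeZero N] (f : Config d N → ℝ) (ν : Config d N → ℝ) : ℝ :=
  (1/4) * ∑ x : Torus d N, ∑ i : Fin d, ∑ η : Config d N,
    (((f (swapC x (x + uvec d N i) η) - f η)^2 + (f (swapC x (x - uvec d N i) η) - f η)^2) * ν η)

/-- The Glauber Dirichlet form `D_G(f;ν) = Σ_x ∫ c_x(η) (f(η^x) - f(η))² dν`. -/
noncomputable def dirG {d N : ℕ} [NeZero N] (c : Torus d N → Config d N → ℝ)
    (f : Config d N → ℝ) (ν : Config d N → ℝ) : ℝ :=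
  ∑ x : Torus d N, ∑ η : Config d N, c x η * (f (flipC x η) - f η)^2 * ν η

/-- The full Dirichlet form `D_N(f;ν) = 2N² D_K(f;ν) + K D_G(f;ν)`. -/
noncomputable def dirN {d N : ℕ} [NeZero N] (K : ℝ) (c : Torus d N → Config d N → ℝ)
    (f : Config d N → ℝ) (ν : Config d N → ℝ) : ℝ :=
  2 * (N:ℝ)^2 * dirK f ν + K * dirG c f ν

/-- The relative entropy `H(μ|ν) = ∫ (dμ/dν) log(dμ/dν) dν`. -/
noncomputable def relEnt {d N : ℕ} [NeZero N] (μ ν : Config d N → ℝ) : ℝ :=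
  ∑ η : Config d N, μ η * Real.log (μ η / ν η)

lemma ent_ineq (a b : ℝ) (ha : 0 ≤ a) (hb : 0 ≤ b) (h : b = 0 → a = 0) :
    a * (Real.log b - Real.log a) ≤ (b - a) - (Real.sqrt b - Real.sqrt a)^2 := by
  rcases eq_or_lt_of_le ha with ha0 | ha0
  · rw [← ha0]
    simp [Real.sq_sqrt hb]
  · have hb0 : 0 < b := by
      rcases eq_or_lt_of_le hb with hb0 | hb0
      · exact absurd (h hb0.symm) (ne_of_gt ha0)
      · exact hb0
    have hs : Real.log (Real.sqrt b / Real.sqrt a) ≤ Real.sqrt b / Real.sqrt a - 1 :=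
      Real.log_le_sub_one_of_pos (by positivity)
    have hlog : Real.log (Real.sqrt b / Real.sqrt a) = (Real.log b - Real.log a) / 2 := by
      rw [Real.log_div (by positivity) (by positivity), Real.log_sqrt hb, Real.log_sqrt ha]
      ring
    rw [hlog] at hs
    have hsa : Real.sqrt a * Real.sqrt a = a := Real.mul_self_sqrt ha
    have hsb : Real.sqrt b * Real.sqrt b = b := Real.mul_self_sqrt hb
    have hsa0 : 0 < Real.sqrt a := Real.sqrt_pos.mpr ha0
    have key : a * ((Real.log b - Real.log a)/2) ≤ a * (Real.sqrt b / Real.sqrt a - 1) :=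
      mul_le_mul_of_nonneg_left hs ha
    have h2 : a * (Real.sqrt b / Real.sqrt a) = Real.sqrt a * Real.sqrt b := by
      field_simp
      linear_combination -hsa
    nlinarith [key, h2]

lemma xlogx_bound (x : ℝ) (hx : 0 ≤ x) (hx1 : x ≤ 1) :
    |x * Real.log x| ≤ 4 * (Real.sqrt x * Real.sqrt (Real.sqrt x)) := by
  rcases eq_or_lt_of_le hx with h0 | h0
  · rw [← h0]; simp
  · have hlogle : Real.log x ≤ 0 := Real.log_nonpos hx hx1
    have habs : |x * Real.log x| = x * (-Real.log x) := by
      rw [abs_of_nonpos (by nlinarith)]; ring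
    rw [habs]
    have h1 : -Real.log x = Real.log x⁻¹ := (Real.log_inv x).symm
    have h2 : Real.log x⁻¹ = 4 * Real.log (Real.sqrt (Real.sqrt x⁻¹)) := by
      rw [Real.log_sqrt (Real.sqrt_nonneg _), Real.log_sqrt (by positivity)]
      ring
    have h3 : Real.log (Real.sqrt (Real.sqrt x⁻¹)) ≤ Real.sqrt (Real.sqrt x⁻¹) :=
      (Real.log_le_sub_one_of_pos (by positivity)).trans (by linarith)
    have h4 : -Real.log x ≤ 4 * Real.sqrt (Real.sqrt x⁻¹) := by
      rw [h1, h2]; linarith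
    have h5 : x * (-Real.log x) ≤ x * (4 * Real.sqrt (Real.sqrt x⁻¹)) :=
      mul_le_mul_of_nonneg_left h4 hx
    have h6 : Real.sqrt (Real.sqrt x⁻¹) = (Real.sqrt (Real.sqrt x))⁻¹ := by
      rw [Real.sqrt_inv, Real.sqrt_inv]
    have hA : Real.sqrt (Real.sqrt x) * Real.sqrt (Real.sqrt x) = Real.sqrt x :=
      Real.mul_self_sqrt (Real.sqrt_nonneg x)
    have hB : Real.sqrt x * Real.sqrt x = x := Real.mul_self_sqrt hx
    have hq : 0 < Real.sqrt (Real.sqrt x) := by positivity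
    have h7 : x * (4 * (Real.sqrt (Real.sqrt x))⁻¹) = 4 * (Real.sqrt x * Real.sqrt (Real.sqrt x)) := by
      field_simp
      nlinarith [hA, hB]
    rw [h6] at h5
    linarith
section gen
variable {d N : ℕ} [NeZero N]

def indC (η : Config d N) : Config d N → ℝ :=
  fun η' => if η' = η then 1 else 0

lemma indC_self (η : Config d N) : indC η η = 1 := by simp [indC]

lemma indC_of_ne {η η' : Config d N} (h : η' ≠ η) : indC η η' = 0 := by simp [indC, h]

lemma indC_nonneg (η η' : Config d N) : 0 ≤ indC η η' := by
  unfold indC; positivity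

lemma indC_le_one (η η' : Config d N) : indC η η' ≤ 1 := by
  unfold indC; split <;> norm_num

lemma swapC_swapC (x y : Torus d N) (η : Config d N) :
    swapC x y (swapC x y η) = η := by
  funext z; simp [swapC, Equiv.swap_apply_self]

lemma flipC_ne (x : Torus d N) (η : Config d N) : flipC x η ≠ η := by
  intro h
  have := congrFun h x
  simp [flipC] at this

lemma sum_indC_mul (η : Config d N) (g : Config d N → ℝ) :
    ∑ η' : Config d N, indC η η' * g η' = g η := by
  simp [indC, ite_mul, Finset.sum_ite_eq']

variable (K : ℝ) (c : Torus d N → Config d N → ℝ)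

lemma kawasaki_ind_nonneg (η₀ η₁ : Config d N) (hne : η₁ ≠ η₀) :
    0 ≤ kawasaki (indC η₀) η₁ := by
  unfold kawasaki
  rw [indC_of_ne hne]
  apply mul_nonneg (by norm_num)
  apply Finset.sum_nonneg; intro x _
  apply Finset.sum_nonneg; intro i _
  linarith [indC_nonneg η₀ (swapC x (x + uvec d N i) η₁),
    indC_nonneg η₀ (swapC x (x - uvec d N i) η₁)]

lemma glauber_ind_nonneg (hc : ∀ x η, 0 ≤ c x η) (η₀ η₁ : Config d N) (hne : η₁ ≠ η₀) :
    0 ≤ glauber c (indC η₀) η₁ := by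
  unfold glauber
  rw [indC_of_ne hne]
  apply Finset.sum_nonneg; intro x _
  have h1 := indC_nonneg η₀ (flipC x η₁)
  have h2 := hc x η₁
  nlinarith

lemma genLN_ind_nonneg (hc : ∀ x η, 0 ≤ c x η) (hK : 0 ≤ K) (η₀ η₁ : Config d N)
    (hne : η₁ ≠ η₀) : 0 ≤ genLN K c (indC η₀) η₁ := by
  unfold genLN
  have h1 := kawasaki_ind_nonneg (N := N) η₀ η₁ hne
  have h2 := glauber_ind_nonneg c hc η₀ η₁ hne
  positivity

lemma kawasaki_ind_lb (η₀ η₁ : Config d N) (hne : η₁ ≠ η₀) (x : Torus d N) (i : Fin d)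
    (hsw : swapC x (x + uvec d N i) η₁ = η₀ ∨ swapC x (x - uvec d N i) η₁ = η₀) :
    (1/2 : ℝ) ≤ kawasaki (indC η₀) η₁ := by
  unfold kawasaki
  rw [indC_of_ne hne]
  set F : Torus d N → ℝ := fun x' => ∑ i' : Fin d,
      ((indC η₀ (swapC x' (x' + uvec d N i') η₁) - 0)
        + (indC η₀ (swapC x' (x' - uvec d N i') η₁) - 0)) with hF
  have hFnn : ∀ x', 0 ≤ F x' := by
    intro x'
    apply Finset.sum_nonneg; intro i' _
    linarith [indC_nonneg η₀ (swapC x' (x' + uvec d N i') η₁),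
      indC_nonneg η₀ (swapC x' (x' - uvec d N i') η₁)]
  have hFx : (1:ℝ) ≤ F x := by
    have hterm : (1:ℝ) ≤ (indC η₀ (swapC x (x + uvec d N i) η₁) - 0)
        + (indC η₀ (swapC x (x - uvec d N i) η₁) - 0) := by
      rcases hsw with h | h
      · rw [h, indC_self]
        linarith [indC_nonneg η₀ (swapC x (x - uvec d N i) η₁)]
      · rw [h, indC_self]
        linarith [indC_nonneg η₀ (swapC x (x + uvec d N i) η₁)]
    refine le_trans hterm ?_
    exact Finset.single_le_sum (f := fun i' => (indC η₀ (swapC x (x + uvec d N i') η₁) - 0)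
        + (indC η₀ (swapC x (x - uvec d N i') η₁) - 0))
      (fun i' _ => by
        linarith [indC_nonneg η₀ (swapC x (x + uvec d N i') η₁),
          indC_nonneg η₀ (swapC x (x - uvec d N i') η₁)]) (Finset.mem_univ i)
  have hsum : (1:ℝ) ≤ ∑ x' : Torus d N, F x' :=
    le_trans hFx (Finset.single_le_sum (f := F) (fun x' _ => hFnn x') (Finset.mem_univ x))
  rw [hF] at hsum
  linarith

lemma glauber_ind_lb (hc : ∀ x η, 0 ≤ c x η) (η₀ η₁ : Config d N) (hne : η₁ ≠ η₀)
    (x : Torus d N) (hfl : flipC x η₁ = η₀) :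
    c x η₁ ≤ glauber c (indC η₀) η₁ := by
  unfold glauber
  rw [indC_of_ne hne]
  set F : Torus d N → ℝ := fun x' => c x' η₁ * (indC η₀ (flipC x' η₁) - 0) with hF
  have hFnn : ∀ x', 0 ≤ F x' := by
    intro x'
    have h1 := indC_nonneg η₀ (flipC x' η₁)
    have h2 := hc x' η₁
    simp only [hF, sub_zero]
    positivity
  have hFx : c x η₁ ≤ F x := by
    simp only [hF, hfl, indC_self, sub_zero, mul_one]; exact le_refl _
  exact le_trans hFx (Finset.single_le_sum (f := F) (fun x' _ => hFnn x') (Finset.mem_univ x))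

end gen

-- quick sanity
example : True := trivial

lemma genLN_const {d N : ℕ} [NeZero N] (K : ℝ) (c : Torus d N → Config d N → ℝ) (r : ℝ)
    (η : Config d N) : genLN K c (fun _ => r) η = 0 := by
  simp [genLN, kawasaki, glauber]

lemma kaw_core {d N : ℕ} [NeZero N] (f g ν : Config d N → ℝ)
    (hg : ∀ η, g η = Real.log (f η)) (hfnn : ∀ η, 0 ≤ f η) (hν : ∀ η, 0 ≤ ν η)
    (hz : ∀ (η : Config d N) (x : Torus d N) (i : Fin d),
      (f (swapC x (x + uvec d N i) η) = 0 → f η = 0)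
        ∧ (f (swapC x (x - uvec d N i) η) = 0 → f η = 0)) :
    ∑ η : Config d N, kawasaki g η * (f η * ν η)
      ≤ -(2 * dirK (fun η => Real.sqrt (f η)) ν)
        + ∑ η : Config d N, kawasaki f η * ν η := by
  have key : ∀ (η : Config d N) (x : Torus d N) (i : Fin d),
      ((g (swapC x (x + uvec d N i) η) - g η) + (g (swapC x (x - uvec d N i) η) - g η))
          * (f η * ν η)
        ≤ ((f (swapC x (x + uvec d N i) η) - f η) + (f (swapC x (x - uvec d N i) η) - f η)) * ν η
          - ((Real.sqrt (f (swapC x (x + uvec d N i) η)) - Real.sqrt (f η))^2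
              + (Real.sqrt (f (swapC x (x - uvec d N i) η)) - Real.sqrt (f η))^2) * ν η := by
    intro η x i
    have hp := ent_ineq (f η) (f (swapC x (x + uvec d N i) η)) (hfnn η) (hfnn _)
      (fun hb => (hz η x i).1 hb)
    have hm := ent_ineq (f η) (f (swapC x (x - uvec d N i) η)) (hfnn η) (hfnn _)
      (fun hb => (hz η x i).2 hb)
    have hmul := mul_le_mul_of_nonneg_right (add_le_add hp hm) (hν η)
    calc ((g (swapC x (x + uvec d N i) η) - g η) + (g (swapC x (x - uvec d N i) η) - g η))
          * (f η * ν η)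
        = (f η * (Real.log (f (swapC x (x + uvec d N i) η)) - Real.log (f η))
            + f η * (Real.log (f (swapC x (x - uvec d N i) η)) - Real.log (f η))) * ν η := by
          rw [hg, hg, hg]; ring
      _ ≤ ((f (swapC x (x + uvec d N i) η) - f η
              - (Real.sqrt (f (swapC x (x + uvec d N i) η)) - Real.sqrt (f η))^2)
            + (f (swapC x (x - uvec d N i) η) - f η
              - (Real.sqrt (f (swapC x (x - uvec d N i) η)) - Real.sqrt (f η))^2)) * ν η := hmul
      _ = ((f (swapC x (x + uvec d N i) η) - f η) + (f (swapC x (x - uvec d N i) η) - f η)) * ν η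
          - ((Real.sqrt (f (swapC x (x + uvec d N i) η)) - Real.sqrt (f η))^2
              + (Real.sqrt (f (swapC x (x - uvec d N i) η)) - Real.sqrt (f η))^2) * ν η := by
          ring
  have e1 : ∑ η : Config d N, kawasaki g η * (f η * ν η)
      = (1/2) * ∑ η : Config d N, ∑ x : Torus d N, ∑ i : Fin d,
          (((g (swapC x (x + uvec d N i) η) - g η) + (g (swapC x (x - uvec d N i) η) - g η))
            * (f η * ν η)) := by
    rw [Finset.mul_sum]
    refine Finset.sum_congr rfl (fun η _ => ?_)
    rw [kawasaki, mul_assoc]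
    congr 1
    rw [Finset.sum_mul]
    refine Finset.sum_congr rfl (fun x _ => ?_)
    rw [Finset.sum_mul]
  have e2 : ∑ η : Config d N, kawasaki f η * ν η
      = (1/2) * ∑ η : Config d N, ∑ x : Torus d N, ∑ i : Fin d,
          (((f (swapC x (x + uvec d N i) η) - f η) + (f (swapC x (x - uvec d N i) η) - f η))
            * ν η) := by
    rw [Finset.mul_sum]
    refine Finset.sum_congr rfl (fun η _ => ?_)
    rw [kawasaki, mul_assoc]
    congr 1
    rw [Finset.sum_mul]
    refine Finset.sum_congr rfl (fun x _ => ?_)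
    rw [Finset.sum_mul]
  have e3 : 2 * dirK (fun η => Real.sqrt (f η)) ν
      = (1/2) * ∑ η : Config d N, ∑ x : Torus d N, ∑ i : Fin d,
          (((Real.sqrt (f (swapC x (x + uvec d N i) η)) - Real.sqrt (f η))^2
              + (Real.sqrt (f (swapC x (x - uvec d N i) η)) - Real.sqrt (f η))^2) * ν η) := by
    rw [dirK]
    have hcomm : ∑ x : Torus d N, ∑ i : Fin d, ∑ η : Config d N,
          (((Real.sqrt (f (swapC x (x + uvec d N i) η)) - Real.sqrt (f η))^2
              + (Real.sqrt (f (swapC x (x - uvec d N i) η)) - Real.sqrt (f η))^2) * ν η)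
        = ∑ η : Config d N, ∑ x : Torus d N, ∑ i : Fin d,
          (((Real.sqrt (f (swapC x (x + uvec d N i) η)) - Real.sqrt (f η))^2
              + (Real.sqrt (f (swapC x (x - uvec d N i) η)) - Real.sqrt (f η))^2) * ν η) := by
      exact Eq.trans (Finset.sum_congr rfl (fun x _ => Finset.sum_comm))
        Finset.sum_comm
    rw [hcomm]
    ring
  rw [e1, e2]
  have hsum : ∑ η : Config d N, ∑ x : Torus d N, ∑ i : Fin d,
        (((g (swapC x (x + uvec d N i) η) - g η) + (g (swapC x (x - uvec d N i) η) - g η))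
          * (f η * ν η))
      ≤ ∑ η : Config d N, ∑ x : Torus d N, ∑ i : Fin d,
        ((((f (swapC x (x + uvec d N i) η) - f η) + (f (swapC x (x - uvec d N i) η) - f η)) * ν η)
          - (((Real.sqrt (f (swapC x (x + uvec d N i) η)) - Real.sqrt (f η))^2
              + (Real.sqrt (f (swapC x (x - uvec d N i) η)) - Real.sqrt (f η))^2) * ν η)) := by
    refine Finset.sum_le_sum (fun η _ => ?_)
    refine Finset.sum_le_sum (fun x _ => ?_)
    refine Finset.sum_le_sum (fun i _ => ?_)
    exact key η x i
  simp only [Finset.sum_sub_distrib] at hsum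
  linarith [e3, hsum]

lemma gl_core {d N : ℕ} [NeZero N] (c : Torus d N → Config d N → ℝ) (f g ν : Config d N → ℝ)
    (hg : ∀ η, g η = Real.log (f η)) (hfnn : ∀ η, 0 ≤ f η) (hν : ∀ η, 0 ≤ ν η)
    (hc : ∀ x η, 0 ≤ c x η)
    (hz : ∀ (η : Config d N) (x : Torus d N), 0 < c x η → f (flipC x η) = 0 → f η = 0) :
    ∑ η : Config d N, glauber c g η * (f η * ν η)
      ≤ -(dirG c (fun η => Real.sqrt (f η)) ν)
        + ∑ η : Config d N, glauber c f η * ν η := by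
  have key : ∀ (η : Config d N) (x : Torus d N),
      c x η * (g (flipC x η) - g η) * (f η * ν η)
        ≤ c x η * (f (flipC x η) - f η) * ν η
          - c x η * (Real.sqrt (f (flipC x η)) - Real.sqrt (f η))^2 * ν η := by
    intro η x
    rcases eq_or_lt_of_le (hc x η) with h0 | hpos
    · rw [← h0]
      simp
    · have hent := ent_ineq (f η) (f (flipC x η)) (hfnn η) (hfnn _) (fun hb => hz η x hpos hb)
      have hmul := mul_le_mul_of_nonneg_right hent
        (mul_nonneg (le_of_lt hpos) (hν η))
      calc c x η * (g (flipC x η) - g η) * (f η * ν η)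
          = (f η * (Real.log (f (flipC x η)) - Real.log (f η))) * (c x η * ν η) := by
            rw [hg, hg]; ring
        _ ≤ ((f (flipC x η) - f η)
              - (Real.sqrt (f (flipC x η)) - Real.sqrt (f η))^2) * (c x η * ν η) := hmul
        _ = c x η * (f (flipC x η) - f η) * ν η
              - c x η * (Real.sqrt (f (flipC x η)) - Real.sqrt (f η))^2 * ν η := by ring
  have e1 : ∑ η : Config d N, glauber c g η * (f η * ν η)
      = ∑ η : Config d N, ∑ x : Torus d N, (c x η * (g (flipC x η) - g η) * (f η * ν η)) := by
    refine Finset.sum_congr rfl (fun η _ => ?_)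
    rw [glauber, Finset.sum_mul]
  have e2 : ∑ η : Config d N, glauber c f η * ν η
      = ∑ η : Config d N, ∑ x : Torus d N, (c x η * (f (flipC x η) - f η) * ν η) := by
    refine Finset.sum_congr rfl (fun η _ => ?_)
    rw [glauber, Finset.sum_mul]
  have e3 : dirG c (fun η => Real.sqrt (f η)) ν
      = ∑ η : Config d N, ∑ x : Torus d N,
          (c x η * (Real.sqrt (f (flipC x η)) - Real.sqrt (f η))^2 * ν η) := by
    rw [dirG]
    exact Finset.sum_comm
  have hsum : ∑ η : Config d N, ∑ x : Torus d N, (c x η * (g (flipC x η) - g η) * (f η * ν η))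
      ≤ ∑ η : Config d N, ∑ x : Torus d N,
          (c x η * (f (flipC x η) - f η) * ν η
            - c x η * (Real.sqrt (f (flipC x η)) - Real.sqrt (f η))^2 * ν η) := by
    refine Finset.sum_le_sum (fun η _ => ?_)
    refine Finset.sum_le_sum (fun x _ => ?_)
    exact key η x
  simp only [Finset.sum_sub_distrib] at hsum
  linarith [e1, e2, e3, hsum]

set_option maxHeartbeats 1000000 in
/-- Proposition 2.3 (Yau's inequality): if `(μ_t)` solves the Kolmogorov forward equation for
`L_N = N² L_K + K L_G`, `m` is a full-support reference probability measure, `(ν_t)` is a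
differentiable family of full-support probability measures with `ψ_t = ν_t/m`, and
`f_t = dμ_t/dν_t`, then
`(d/dt) H(μ_t|ν_t) ≤ - D_N(√f_t; ν_t) + ∫ (L_N^{*,ν_t} 1 - ∂_t log ψ_t) dμ_t`,
where `L_N^{*,ν_t} 1` is characterized by the adjoint relation in `L²(ν_t)`. -/
theorem yau_inequality (d N : ℕ) [NeZero N] (hd : 1 ≤ d) (K : ℝ) (hK : 0 < K)
    (c : Torus d N → Config d N → ℝ) (hc : ∀ x η, 0 ≤ c x η)
    (μ ν : ℝ → Config d N → ℝ) (m : Config d N → ℝ)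
    (hμnonneg : ∀ t η, 0 ≤ μ t η) (hμone : ∀ t, ∑ η : Config d N, μ t η = 1)
    (hνpos : ∀ t η, 0 < ν t η) (hνone : ∀ t, ∑ η : Config d N, ν t η = 1)
    (hmpos : ∀ η, 0 < m η) (hmone : ∑ η : Config d N, m η = 1)
    (hforward : ∀ (f : Config d N → ℝ) (t : ℝ),
      HasDerivAt (fun s => ∑ η : Config d N, f η * μ s η)
        (∑ η : Config d N, genLN K c f η * μ t η) t)
    (hνdiff : ∀ η, Differentiable ℝ (fun s => ν s η))
    (Lstar1 : ℝ → Config d N → ℝ)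
    (hLstar : ∀ (t : ℝ) (f : Config d N → ℝ),
      ∑ η : Config d N, genLN K c f η * ν t η
        = ∑ η : Config d N, Lstar1 t η * f η * ν t η)
    (t : ℝ) :
    deriv (fun s => relEnt (μ s) (ν s)) t
      ≤ - dirN K c (fun η => Real.sqrt (μ t η / ν t η)) (ν t)
        + ∑ η : Config d N,
            (Lstar1 t η - deriv (fun s => Real.log (ν s η / m η)) t) * μ t η := by
  classical
  have hN1 : (1:ℝ) ≤ (N:ℝ) := by
    have := Nat.one_le_iff_ne_zero.mpr (NeZero.ne N)
    exact_mod_cast this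
  -- the time derivative of μ
  set Dm : ℝ → Config d N → ℝ :=
    fun s η => ∑ η' : Config d N, genLN K c (indC η) η' * μ s η' with hDm
  have hμderiv : ∀ (η : Config d N) (s : ℝ), HasDerivAt (fun s' => μ s' η) (Dm s η) s := by
    intro η s
    have h := hforward (indC η) s
    have heq : (fun s' => ∑ η' : Config d N, indC η η' * μ s' η') = fun s' => μ s' η := by
      funext s'
      exact sum_indC_mul η (μ s')
    rw [heq] at h
    exact h
  have hμub : ∀ (s : ℝ) (η : Config d N), μ s η ≤ 1 := by
    intro s η
    calc μ s η ≤ ∑ η' : Config d N, μ s η' :=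
          Finset.single_le_sum (f := μ s) (fun η' _ => hμnonneg s η') (Finset.mem_univ η)
      _ = 1 := hμone s
  -- at a zero of μ the derivative vanishes
  have hDzero : ∀ (s : ℝ) (η : Config d N), μ s η = 0 → Dm s η = 0 := by
    intro s η h0
    have hmin : IsLocalMin (fun s' => μ s' η) s := by
      apply Filter.Eventually.of_forall
      intro s'
      simp only [h0]
      exact hμnonneg s' η
    exact hmin.hasDerivAt_eq_zero (hμderiv η s)
  -- zero propagation
  have hzero_prop : ∀ η₀ η₁ : Config d N, μ t η₀ = 0 → η₁ ≠ η₀ →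
      0 < genLN K c (indC η₀) η₁ → μ t η₁ = 0 := by
    intro η₀ η₁ h0 hne hpos
    have hD := hDzero t η₀ h0
    rw [hDm] at hD
    have hnn : ∀ η' ∈ Finset.univ (α := Config d N),
        0 ≤ genLN K c (indC η₀) η' * μ t η' := by
      intro η' _
      rcases eq_or_ne η' η₀ with rfl | hne'
      · rw [h0, mul_zero]
      · exact mul_nonneg (genLN_ind_nonneg K c hc hK.le η₀ η' hne') (hμnonneg t η')
    have hall := (Finset.sum_eq_zero_iff_of_nonneg hnn).mp hD
    have := hall η₁ (Finset.mem_univ η₁)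
    rcases mul_eq_zero.mp this with h | h
    · exact absurd h (ne_of_gt hpos)
    · exact h
  have hswap_zero : ∀ (η : Config d N) (x : Torus d N) (i : Fin d),
      (μ t (swapC x (x + uvec d N i) η) = 0 → μ t η = 0)
        ∧ (μ t (swapC x (x - uvec d N i) η) = 0 → μ t η = 0) := by
    intro η x i
    constructor
    all_goals intro h0
    · rcases eq_or_ne η (swapC x (x + uvec d N i) η) with he | hne
      · rw [he]; exact h0
      · refine hzero_prop _ η h0 hne ?_
        have hk : (1/2 : ℝ) ≤ kawasaki (indC (swapC x (x + uvec d N i) η)) η :=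
          kawasaki_ind_lb _ η hne x i (Or.inl rfl)
        have hg : 0 ≤ glauber c (indC (swapC x (x + uvec d N i) η)) η :=
          glauber_ind_nonneg c hc _ η hne
        unfold genLN
        nlinarith
    · rcases eq_or_ne η (swapC x (x - uvec d N i) η) with he | hne
      · rw [he]; exact h0
      · refine hzero_prop _ η h0 hne ?_
        have hk : (1/2 : ℝ) ≤ kawasaki (indC (swapC x (x - uvec d N i) η)) η :=
          kawasaki_ind_lb _ η hne x i (Or.inr rfl)
        have hg : 0 ≤ glauber c (indC (swapC x (x - uvec d N i) η)) η :=
          glauber_ind_nonneg c hc _ η hne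
        unfold genLN
        nlinarith
  have hflip_zero : ∀ (η : Config d N) (x : Torus d N), 0 < c x η →
      μ t (flipC x η) = 0 → μ t η = 0 := by
    intro η x hcx h0
    have hne : η ≠ flipC x η := (flipC_ne x η).symm
    refine hzero_prop _ η h0 hne ?_
    have hg : c x η ≤ glauber c (indC (flipC x η)) η :=
      glauber_ind_lb c hc _ η hne x rfl
    have hk : 0 ≤ kawasaki (indC (flipC x η)) η := kawasaki_ind_nonneg _ η hne
    unfold genLN
    nlinarith
  -- derivative of ν
  set nuD : Config d N → ℝ := fun η => deriv (fun s => ν s η) t with hnuD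
  have hνderiv : ∀ η : Config d N, HasDerivAt (fun s => ν s η) (nuD η) t :=
    fun η => ((hνdiff η) t).hasDerivAt
  -- derivative of each entropy summand
  have hent : ∀ η : Config d N,
      HasDerivAt (fun s => μ s η * Real.log (μ s η / ν s η))
        (Dm t η * Real.log (μ t η / ν t η) + Dm t η - μ t η / ν t η * nuD η) t := by
    intro η
    rcases eq_or_lt_of_le (hμnonneg t η) with h0 | hpos
    · -- zero case
      have h0 : μ t η = 0 := h0.symm
      have hD0 : Dm t η = 0 := hDzero t η h0
      have hval : Dm t η * Real.log (μ t η / ν t η) + Dm t η - μ t η / ν t η * nuD η = 0 := by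
        rw [hD0, h0]
        simp
      rw [hval]
      -- second piece : μ * log ν
      have hsecond : HasDerivAt (fun s => μ s η * Real.log (ν s η)) 0 t := by
        have h := (hμderiv η t).mul ((hνderiv η).log (ne_of_gt (hνpos t η)))
        have : Dm t η * Real.log (ν t η) + μ t η * (nuD η / ν t η) = 0 := by
          rw [hD0, h0]; ring
        rwa [this] at h
      -- first piece : μ * log μ, derivative 0
      have hfirst : HasDerivAt (fun s => μ s η * Real.log (μ s η)) 0 t := by
        -- quadratic bound on μ near t
        have hDm' : HasDerivAt (fun s => Dm s η)
            (∑ η' : Config d N, genLN K c (indC η) η' * Dm t η') t := by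
          apply HasDerivAt.fun_sum
          intro η' _
          exact (hμderiv η' t).const_mul (genLN K c (indC η) η')
        have hO : (fun s => Dm s η) =O[nhds t] fun s => s - t := by
          have := hDm'.isBigO_sub
          simpa [hD0] using this
        obtain ⟨C₀, hC₀⟩ := hO.bound
        set C : ℝ := max C₀ 1 with hC
        have hC1 : (1:ℝ) ≤ C := le_max_right _ _
        have hCpos : (0:ℝ) < C := lt_of_lt_of_le one_pos hC1
        have hCb : ∀ᶠ s in nhds t, |Dm s η| ≤ C * |s - t| := by
          filter_upwards [hC₀] with s hs
          calc |Dm s η| = ‖Dm s η‖ := rfl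
            _ ≤ C₀ * ‖s - t‖ := hs
            _ ≤ C * |s - t| := by
                apply mul_le_mul_of_nonneg_right (le_max_left _ _) (abs_nonneg _)
        rw [Metric.eventually_nhds_iff] at hCb
        obtain ⟨δ, hδpos, hδ⟩ := hCb
        have hquad : ∀ s : ℝ, dist s t < δ → μ s η ≤ C * |s - t| ^ 2 := by
          intro s hs
          rcases eq_or_ne s t with rfl | hne
          · simp [h0]
          · set r := |s - t| with hr
            have hrpos : 0 < r := abs_pos.mpr (sub_ne_zero.mpr hne)
            have hb : ∀ z ∈ Metric.closedBall t r, ‖Dm z η‖ ≤ C * r := by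
              intro z hz
              have hzr : |z - t| ≤ r := by
                rw [Metric.mem_closedBall, Real.dist_eq] at hz
                exact hz
              have hzδ : dist z t < δ := by
                rw [Real.dist_eq]
                calc |z - t| ≤ r := hzr
                  _ = dist s t := by rw [Real.dist_eq]
                  _ < δ := hs
              calc ‖Dm z η‖ = |Dm z η| := rfl
                _ ≤ C * |z - t| := hδ hzδ
                _ ≤ C * r := mul_le_mul_of_nonneg_left hzr hCpos.le
            have hder : ∀ z ∈ Metric.closedBall t r,
                HasDerivWithinAt (fun s' => μ s' η) (Dm z η) (Metric.closedBall t r) z :=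
              fun z _ => (hμderiv η z).hasDerivWithinAt
            have hmem_t : t ∈ Metric.closedBall t r := Metric.mem_closedBall_self hrpos.le
            have hmem_s : s ∈ Metric.closedBall t r := by
              rw [Metric.mem_closedBall, Real.dist_eq]
            have := (convex_closedBall t r).norm_image_sub_le_of_norm_hasDerivWithin_le
              hder hb hmem_t hmem_s
            rw [h0, sub_zero] at this
            calc μ s η ≤ |μ s η| := le_abs_self _
              _ = ‖μ s η‖ := rfl
              _ ≤ C * r * ‖s - t‖ := this
              _ = C * |s - t| ^ 2 := by rw [hr]; rw [Real.norm_eq_abs]; ring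
        -- now the slope argument
        rw [hasDerivAt_iff_tendsto_slope]
        set M : ℝ := 4 * Real.sqrt C * Real.sqrt (Real.sqrt C) with hM
        have hMpos : 0 < M := by
          rw [hM]; positivity
        refine squeeze_zero_norm' (a := fun s => M * Real.sqrt |s - t|) ?_ ?_
        · have hballn : ∀ᶠ (s : ℝ) in nhds t, dist s t < δ :=
            Metric.eventually_nhds_iff.mpr ⟨δ, hδpos, fun {y} hy => hy⟩
          filter_upwards [hballn.filter_mono nhdsWithin_le_nhds,
            eventually_mem_nhdsWithin] with s hsδ hsmem
          have hne : s ≠ t := by simpa using hsmem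
          set r := |s - t| with hr
          have hrpos : 0 < r := abs_pos.mpr (sub_ne_zero.mpr hne)
          have hx0 : 0 ≤ μ s η := hμnonneg s η
          have hx1 : μ s η ≤ 1 := hμub s η
          have hxb : μ s η ≤ C * r ^ 2 := hquad s hsδ
          have h1 : |μ s η * Real.log (μ s η)| ≤
              4 * (Real.sqrt (μ s η) * Real.sqrt (Real.sqrt (μ s η))) :=
            xlogx_bound _ hx0 hx1
          have h2 : Real.sqrt (μ s η) ≤ Real.sqrt C * r := by
            calc Real.sqrt (μ s η) ≤ Real.sqrt (C * r ^ 2) := Real.sqrt_le_sqrt hxb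
              _ = Real.sqrt C * r := by
                  rw [Real.sqrt_mul hCpos.le, Real.sqrt_sq (abs_nonneg _)]
          have h3 : Real.sqrt (Real.sqrt (μ s η)) ≤
              Real.sqrt (Real.sqrt C) * Real.sqrt r := by
            calc Real.sqrt (Real.sqrt (μ s η)) ≤ Real.sqrt (Real.sqrt C * r) :=
                  Real.sqrt_le_sqrt h2
              _ = Real.sqrt (Real.sqrt C) * Real.sqrt r :=
                  Real.sqrt_mul (Real.sqrt_nonneg _) _
          have h4 : |μ s η * Real.log (μ s η)| ≤ M * Real.sqrt r * r := by
            have hmul : Real.sqrt (μ s η) * Real.sqrt (Real.sqrt (μ s η)) ≤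
                (Real.sqrt C * r) * (Real.sqrt (Real.sqrt C) * Real.sqrt r) :=
              mul_le_mul h2 h3 (Real.sqrt_nonneg _) (by positivity)
            calc |μ s η * Real.log (μ s η)| ≤
                  4 * (Real.sqrt (μ s η) * Real.sqrt (Real.sqrt (μ s η))) := h1
              _ ≤ 4 * ((Real.sqrt C * r) * (Real.sqrt (Real.sqrt C) * Real.sqrt r)) := by
                  linarith
              _ = M * Real.sqrt r * r := by rw [hM]; ring
          have hslope : slope (fun s' => μ s' η * Real.log (μ s' η)) t s
              = (μ s η * Real.log (μ s η)) / (s - t) := by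
            rw [slope_def_field, h0, zero_mul, sub_zero]
          rw [Real.norm_eq_abs, hslope, abs_div, div_le_iff₀ hrpos]
          calc |μ s η * Real.log (μ s η)| ≤ M * Real.sqrt r * r := h4
            _ = M * Real.sqrt |s - t| * |s - t| := by rw [hr]
        · have hcont : Filter.Tendsto (fun s => M * Real.sqrt |s - t|) (nhds t)
              (nhds (M * Real.sqrt |t - t|)) := by
            apply Filter.Tendsto.const_mul
            exact (Real.continuous_sqrt.comp (continuous_abs.comp
              (continuous_sub_right t))).tendsto t
          have : M * Real.sqrt |t - t| = 0 := by simp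
          rw [this] at hcont
          exact hcont.mono_left nhdsWithin_le_nhds
      -- combine
      have hcomb := hfirst.sub hsecond
      rw [sub_zero] at hcomb
      have heq : (fun s => μ s η * Real.log (μ s η / ν s η))
          = fun s => μ s η * Real.log (μ s η) - μ s η * Real.log (ν s η) := by
        funext s
        rcases eq_or_lt_of_le (hμnonneg s η) with hz | hz
        · rw [← hz]; simp
        · rw [Real.log_div (ne_of_gt hz) (ne_of_gt (hνpos s η))]; ring
      rw [heq]
      exact hcomb
    · -- positive case
      have hev : ∀ᶠ s in nhds t, 0 < μ s η :=
        (hμderiv η t).continuousAt.eventually (eventually_gt_nhds hpos)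
      have hprod : HasDerivAt (fun s => μ s η * (Real.log (μ s η) - Real.log (ν s η)))
          (Dm t η * (Real.log (μ t η) - Real.log (ν t η))
            + μ t η * (Dm t η / μ t η - nuD η / ν t η)) t :=
        (hμderiv η t).mul (((hμderiv η t).log (ne_of_gt hpos)).sub
          ((hνderiv η).log (ne_of_gt (hνpos t η))))
      have heq : (fun s => μ s η * Real.log (μ s η / ν s η))
          =ᶠ[nhds t] fun s => μ s η * (Real.log (μ s η) - Real.log (ν s η)) := by
        filter_upwards [hev] with s hs
        rw [Real.log_div (ne_of_gt hs) (ne_of_gt (hνpos s η))]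
      have h := hprod.congr_of_eventuallyEq heq
      have hvv : Dm t η * (Real.log (μ t η) - Real.log (ν t η))
            + μ t η * (Dm t η / μ t η - nuD η / ν t η)
          = Dm t η * Real.log (μ t η / ν t η) + Dm t η - μ t η / ν t η * nuD η := by
        rw [Real.log_div (ne_of_gt hpos) (ne_of_gt (hνpos t η))]
        field_simp
        ring
      rwa [hvv] at h
  -- derivative of the relative entropy
  have hH : HasDerivAt (fun s => relEnt (μ s) (ν s))
      (∑ η : Config d N,
        (Dm t η * Real.log (μ t η / ν t η) + Dm t η - μ t η / ν t η * nuD η)) t := by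
    have := HasDerivAt.fun_sum (fun η (_ : η ∈ Finset.univ (α := Config d N)) => hent η)
    exact this
  rw [hH.deriv]
  -- summation by parts through the forward equation
  have hSumDeriv : ∀ G : Config d N → ℝ,
      ∑ η : Config d N, G η * Dm t η = ∑ η : Config d N, genLN K c G η * μ t η := by
    intro G
    have h1 : HasDerivAt (fun s => ∑ η : Config d N, G η * μ s η)
        (∑ η : Config d N, G η * Dm t η) t :=
      HasDerivAt.fun_sum (fun η _ => (hμderiv η t).const_mul (G η))
    exact h1.unique (hforward G t)
  -- the deriv of log ψ
  have hderivlog : ∀ η : Config d N,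
      deriv (fun s => Real.log (ν s η / m η)) t = nuD η / ν t η := by
    intro η
    have h1 : HasDerivAt (fun s => ν s η / m η) (nuD η / m η) t :=
      (hνderiv η).div_const (m η)
    have h2 : HasDerivAt (fun s => Real.log (ν s η / m η))
        ((nuD η / m η) / (ν t η / m η)) t :=
      h1.log (ne_of_gt (div_pos (hνpos t η) (hmpos η)))
    have h3 : (nuD η / m η) / (ν t η / m η) = nuD η / ν t η := by
      have hm : m η ≠ 0 := ne_of_gt (hmpos η)
      have hn : ν t η ≠ 0 := ne_of_gt (hνpos t η)
      field_simp
    rw [← h3]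
    exact h2.deriv
  -- rewrite the right-hand side
  simp only [hderivlog]
  -- abbreviations
  have hfnn : ∀ η : Config d N, 0 ≤ μ t η / ν t η :=
    fun η => div_nonneg (hμnonneg t η) (hνpos t η).le
  have hμf : ∀ η : Config d N, μ t η = (μ t η / ν t η) * ν t η :=
    fun η => (div_mul_cancel₀ _ (ne_of_gt (hνpos t η))).symm
  -- split the left-hand sum
  have split : ∑ η : Config d N,
        (Dm t η * Real.log (μ t η / ν t η) + Dm t η - μ t η / ν t η * nuD η)
      = (∑ η : Config d N, Real.log (μ t η / ν t η) * Dm t η)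
        + (∑ η : Config d N, (1:ℝ) * Dm t η)
        - ∑ η : Config d N, (nuD η / ν t η) * μ t η := by
    rw [← Finset.sum_add_distrib, ← Finset.sum_sub_distrib]
    refine Finset.sum_congr rfl (fun η _ => ?_)
    have hne : ν t η ≠ 0 := ne_of_gt (hνpos t η)
    field_simp
  rw [split, hSumDeriv (fun η => Real.log (μ t η / ν t η)), hSumDeriv (fun _ => (1:ℝ))]
  have hzero1 : ∑ η : Config d N, genLN K c (fun _ => (1:ℝ)) η * μ t η = 0 := by
    refine Finset.sum_eq_zero (fun η _ => ?_)
    rw [genLN_const, zero_mul]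
  rw [hzero1, add_zero]
  -- split the right-hand sum
  have splitR : ∑ η : Config d N, (Lstar1 t η - nuD η / ν t η) * μ t η
      = (∑ η : Config d N, Lstar1 t η * μ t η)
        - ∑ η : Config d N, (nuD η / ν t η) * μ t η := by
    rw [← Finset.sum_sub_distrib]
    refine Finset.sum_congr rfl (fun η _ => ?_)
    ring
  rw [splitR]
  -- replace the adjoint term
  have hR : ∑ η : Config d N, Lstar1 t η * μ t η
      = ∑ η : Config d N, genLN K c (fun η' => μ t η' / ν t η') η * ν t η := by
    rw [hLstar t (fun η' => μ t η' / ν t η')]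
    refine Finset.sum_congr rfl (fun η _ => ?_)
    rw [mul_assoc, ← hμf η]
  rw [hR]
  -- replace μ by f ν in the left sum
  have hL : ∑ η : Config d N, genLN K c (fun η' => Real.log (μ t η' / ν t η')) η * μ t η
      = ∑ η : Config d N, genLN K c (fun η' => Real.log (μ t η' / ν t η')) η
          * ((μ t η / ν t η) * ν t η) := by
    refine Finset.sum_congr rfl (fun η _ => ?_)
    rw [← hμf η]
  rw [hL]
  -- zero propagation for the density f = μ/ν
  have hzf_swap : ∀ (η : Config d N) (x : Torus d N) (i : Fin d),
      (μ t (swapC x (x + uvec d N i) η) / ν t (swapC x (x + uvec d N i) η) = 0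
        → μ t η / ν t η = 0)
      ∧ (μ t (swapC x (x - uvec d N i) η) / ν t (swapC x (x - uvec d N i) η) = 0
        → μ t η / ν t η = 0) := by
    intro η x i
    constructor
    · intro h
      have h0 : μ t (swapC x (x + uvec d N i) η) = 0 := by
        rcases div_eq_zero_iff.mp h with h | h
        · exact h
        · exact absurd h (ne_of_gt (hνpos t _))
      rw [(hswap_zero η x i).1 h0, zero_div]
    · intro h
      have h0 : μ t (swapC x (x - uvec d N i) η) = 0 := by
        rcases div_eq_zero_iff.mp h with h | h
        · exact h
        · exact absurd h (ne_of_gt (hνpos t _))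
      rw [(hswap_zero η x i).2 h0, zero_div]
  have hzf_flip : ∀ (η : Config d N) (x : Torus d N), 0 < c x η →
      μ t (flipC x η) / ν t (flipC x η) = 0 → μ t η / ν t η = 0 := by
    intro η x hcx h
    have h0 : μ t (flipC x η) = 0 := by
      rcases div_eq_zero_iff.mp h with h | h
      · exact h
      · exact absurd h (ne_of_gt (hνpos t _))
    rw [hflip_zero η x hcx h0, zero_div]
  -- the two core inequalities
  have hKcore : ∑ η : Config d N,
        kawasaki (fun η' => Real.log (μ t η' / ν t η')) η * ((μ t η / ν t η) * ν t η)
      ≤ -(2 * dirK (fun η => Real.sqrt (μ t η / ν t η)) (ν t))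
        + ∑ η : Config d N, kawasaki (fun η' => μ t η' / ν t η') η * ν t η :=
    kaw_core (fun η' => μ t η' / ν t η') (fun η' => Real.log (μ t η' / ν t η')) (ν t)
      (fun _ => rfl) hfnn (fun η => (hνpos t η).le) hzf_swap
  have hGcore : ∑ η : Config d N,
        glauber c (fun η' => Real.log (μ t η' / ν t η')) η * ((μ t η / ν t η) * ν t η)
      ≤ -(dirG c (fun η => Real.sqrt (μ t η / ν t η)) (ν t))
        + ∑ η : Config d N, glauber c (fun η' => μ t η' / ν t η') η * ν t η :=
    gl_core c (fun η' => μ t η' / ν t η') (fun η' => Real.log (μ t η' / ν t η')) (ν t)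
      (fun _ => rfl) hfnn (fun η => (hνpos t η).le) hc hzf_flip
  -- expand genLN in both sums
  have expandL : ∑ η : Config d N,
        genLN K c (fun η' => Real.log (μ t η' / ν t η')) η * ((μ t η / ν t η) * ν t η)
      = (N:ℝ)^2 * ∑ η : Config d N,
            kawasaki (fun η' => Real.log (μ t η' / ν t η')) η * ((μ t η / ν t η) * ν t η)
        + K * ∑ η : Config d N,
            glauber c (fun η' => Real.log (μ t η' / ν t η')) η * ((μ t η / ν t η) * ν t η) := by
    rw [Finset.mul_sum, Finset.mul_sum, ← Finset.sum_add_distrib]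
    refine Finset.sum_congr rfl (fun η _ => ?_)
    rw [genLN]
    ring
  have expandR : ∑ η : Config d N, genLN K c (fun η' => μ t η' / ν t η') η * ν t η
      = (N:ℝ)^2 * ∑ η : Config d N, kawasaki (fun η' => μ t η' / ν t η') η * ν t η
        + K * ∑ η : Config d N, glauber c (fun η' => μ t η' / ν t η') η * ν t η := by
    rw [Finset.mul_sum, Finset.mul_sum, ← Finset.sum_add_distrib]
    refine Finset.sum_congr rfl (fun η _ => ?_)
    rw [genLN]
    ring
  rw [expandL, expandR, dirN]
  have hN2 : (0:ℝ) ≤ (N:ℝ)^2 := by positivity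
  have hfinK := mul_le_mul_of_nonneg_left hKcore hN2
  have hfinG := mul_le_mul_of_nonneg_left hGcore hK.le
  nlinarith [hfinK, hfinG]
end

section
/- Let ν = ν_{u(·)} be the product Bernoulli measure on X_N with means u = (u_x)_{x∈T_N^d} ∈ (0,1)^{T_N^d}. Then the adjoint of the Kawasaki generator applied to the constant function 1 satisfies, pointwise in η ∈ X_N, (L_K^{*,ν} 1)(η) = −(1/2) Σ_{x,y∈T_N^d:|x−y|=1} (u_y − u_x)² ω_x ω_y + Σ_{x∈T_N^d} (Δu)_x ω_x, where (Δu)_x = Σ_{y:|y−x|=1} (u_y − u_x). Equivalently, for every function f on X_N, Σ_η (L_K f)(η) ν(η) = Σ_η [ −(1/2) Σ_{|x−y|=1} (u_y − u_x)² ω_x(η) ω_y(η) + Σ_x (Δu)_x ω_x(η) ] f(η) ν(η). -/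
open Finset

/-- The value in `{0,1} ⊂ ℝ` of an occupation variable. -/
noncomputable def bval : Bool → ℝ := fun b => if b then 1 else 0

/-- The product Bernoulli measure with means `u`. -/
noncomputable def bern {d N : ℕ} [NeZero N] (u : Torus d N → ℝ) (η : Config d N) : ℝ :=
  ∏ x : Torus d N, (if η x then u x else 1 - u x)

/-- The normalized centered occupation variable `ω_x = (η_x - u_x)/χ(u_x)`. -/
noncomputable def omg {d N : ℕ} (u : Torus d N → ℝ) (x : Torus d N) (η : Config d N) : ℝ :=
  (bval (η x) - u x) / (u x * (1 - u x))

section KawasakiAux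
variable {d N : ℕ} [NeZero N]

lemma sum_config_swap (x y : Torus d N) (g : Config d N → ℝ) :
    ∑ η : Config d N, g (swapC x y η) = ∑ η : Config d N, g η :=
  Fintype.sum_bijective (swapC x y) (Function.Involutive.bijective (swapC_swapC x y)) _ _
    (fun _ => rfl)

lemma bern_swap (u : Torus d N → ℝ) (hu : ∀ x, u x ∈ Set.Ioo (0:ℝ) 1)
    (x y : Torus d N) (η : Config d N) :
    bern u (swapC x y η) = bern u η + bern u η *
      (-(u y - u x)^2 * omg u x η * omg u y η
        + ((u y - u x) * omg u x η + (u x - u y) * omg u y η)) := by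
  by_cases hxy : x = y
  · subst hxy
    have h : swapC x x η = η := by funext z; simp [swapC]
    rw [h]; ring
  · have hyx : y ∈ (univ : Finset (Torus d N)).erase x :=
      mem_erase.mpr ⟨fun h => hxy h.symm, mem_univ y⟩
    have h1 : u x ≠ 0 := (hu x).1.ne'
    have h2 : (1:ℝ) - u x ≠ 0 := sub_ne_zero.mpr (hu x).2.ne'
    have h3 : u y ≠ 0 := (hu y).1.ne'
    have h4 : (1:ℝ) - u y ≠ 0 := sub_ne_zero.mpr (hu y).2.ne'
    have e1 : swapC x y η x = η y := by simp [swapC]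
    have e2 : swapC x y η y = η x := by simp [swapC]
    have hb : bern u η = (if η x then u x else 1 - u x) *
        ((if η y then u y else 1 - u y) *
          ∏ z ∈ ((univ : Finset (Torus d N)).erase x).erase y,
            (if η z then u z else 1 - u z)) := by
      rw [bern, ← Finset.mul_prod_erase _ _ (mem_univ x), ← Finset.mul_prod_erase _ _ hyx]
    have hbs : bern u (swapC x y η) = (if η y then u x else 1 - u x) *
        ((if η x then u y else 1 - u y) *
          ∏ z ∈ ((univ : Finset (Torus d N)).erase x).erase y,
            (if η z then u z else 1 - u z)) := by
      rw [bern, ← Finset.mul_prod_erase _ _ (mem_univ x), ← Finset.mul_prod_erase _ _ hyx,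
        e1, e2]
      congr 1
      congr 1
      refine Finset.prod_congr rfl fun z hz => ?_
      obtain ⟨hzy, hz'⟩ := mem_erase.mp hz
      obtain ⟨hzx, -⟩ := mem_erase.mp hz'
      rw [show swapC x y η z = η z by simp [swapC, Equiv.swap_apply_of_ne_of_ne hzx hzy]]
    rw [hbs, hb]
    simp only [omg]
    generalize (∏ z ∈ ((univ : Finset (Torus d N)).erase x).erase y,
        (if η z then u z else 1 - u z)) = R
    cases hEx : η x <;> cases hEy : η y <;>
      simp only [bval, if_true, if_false, Bool.false_eq_true, ite_true, ite_false] <;>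
      field_simp <;> ring
lemma sum_shift (v : Torus d N) (Q : Torus d N → Torus d N → ℝ) :
    ∑ x : Torus d N, Q (x + v) x = ∑ x : Torus d N, Q x (x - v) :=
  (Fintype.sum_equiv (Equiv.subRight v) (fun x => Q x (x - v)) (fun x => Q (x + v) x)
    (fun x => by
      show Q x (x - v) = Q (x - v + v) (x - v)
      rw [show x - v + v = x from by ring])).symm

lemma sum_rot {α β γ : Type*} [Fintype α] [Fintype β] [Fintype γ] (g : α → β → γ → ℝ) :
    ∑ a : α, ∑ b : β, ∑ c : γ, g a b c = ∑ b : β, ∑ c : γ, ∑ a : α, g a b c := by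
  rw [Finset.sum_comm]
  exact sum_congr rfl fun b _ => Finset.sum_comm

noncomputable def Gf (u : Torus d N → ℝ) (f : Config d N → ℝ) (x y : Torus d N) : ℝ :=
  ∑ η : Config d N, f η * bern u η * (-(u y - u x)^2 * omg u x η * omg u y η)

noncomputable def Qf (u : Torus d N → ℝ) (f : Config d N → ℝ) (z w : Torus d N) : ℝ :=
  ∑ η : Config d N, f η * bern u η * ((u w - u z) * omg u z η)

lemma key (u : Torus d N → ℝ) (hu : ∀ x, u x ∈ Set.Ioo (0:ℝ) 1) (f : Config d N → ℝ)
    (x y : Torus d N) :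
    ∑ η : Config d N, (f (swapC x y η) - f η) * bern u η
      = Gf u f x y + (Qf u f x y + Qf u f y x) := by
  have h1 : ∑ η : Config d N, f (swapC x y η) * bern u η
      = ∑ η : Config d N, f η * bern u (swapC x y η) := by
    have h := sum_config_swap x y (fun η => f η * bern u (swapC x y η))
    simp only [swapC_swapC] at h
    exact h
  calc ∑ η : Config d N, (f (swapC x y η) - f η) * bern u η
      = (∑ η : Config d N, f (swapC x y η) * bern u η)
        - ∑ η : Config d N, f η * bern u η := by
        rw [← Finset.sum_sub_distrib]
        exact sum_congr rfl fun η _ => by ring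
    _ = (∑ η : Config d N, f η * bern u (swapC x y η))
        - ∑ η : Config d N, f η * bern u η := by rw [h1]
    _ = ∑ η : Config d N, (f η * bern u (swapC x y η) - f η * bern u η) := by
        rw [Finset.sum_sub_distrib]
    _ = ∑ η : Config d N, (f η * bern u η * (-(u y - u x)^2 * omg u x η * omg u y η)
          + (f η * bern u η * ((u y - u x) * omg u x η)
             + f η * bern u η * ((u x - u y) * omg u y η))) :=
        sum_congr rfl fun η _ => by rw [bern_swap u hu x y η]; ring
    _ = Gf u f x y + (Qf u f x y + Qf u f y x) := by
        rw [Finset.sum_add_distrib, Finset.sum_add_distrib]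
        rfl

lemma per_dir (u : Torus d N → ℝ) (hu : ∀ x, u x ∈ Set.Ioo (0:ℝ) 1) (f : Config d N → ℝ)
    (v : Torus d N) :
    ∑ x : Torus d N, ∑ η : Config d N,
      ((f (swapC x (x + v) η) - f η) + (f (swapC x (x - v) η) - f η)) * bern u η
  = ∑ x : Torus d N, ∑ η : Config d N,
      (-((u (x + v) - u x)^2 * omg u x η * omg u (x + v) η
         + (u (x - v) - u x)^2 * omg u x η * omg u (x - v) η)
       + 2 * ((u (x + v) + u (x - v) - 2 * u x) * omg u x η)) * (f η * bern u η) := by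
  have s1 : ∑ x : Torus d N, Qf u f (x + v) x = ∑ x : Torus d N, Qf u f x (x - v) :=
    sum_shift v (Qf u f)
  have s2 : ∑ x : Torus d N, Qf u f (x - v) x = ∑ x : Torus d N, Qf u f x (x + v) := by
    have h := sum_shift (-v) (Qf u f)
    simpa [sub_eq_add_neg, sub_neg_eq_add] using h
  have hgq : ∀ x : Torus d N, ∑ η : Config d N,
      (-((u (x + v) - u x)^2 * omg u x η * omg u (x + v) η
         + (u (x - v) - u x)^2 * omg u x η * omg u (x - v) η)
       + 2 * ((u (x + v) + u (x - v) - 2 * u x) * omg u x η)) * (f η * bern u η)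
      = Gf u f x (x + v) + Gf u f x (x - v) + 2 * Qf u f x (x + v) + 2 * Qf u f x (x - v) := by
    intro x
    simp only [Gf, Qf, Finset.mul_sum, ← Finset.sum_add_distrib]
    exact sum_congr rfl fun η _ => by ring
  calc ∑ x : Torus d N, ∑ η : Config d N,
        ((f (swapC x (x + v) η) - f η) + (f (swapC x (x - v) η) - f η)) * bern u η
      = ∑ x : Torus d N,
          ((Gf u f x (x + v) + (Qf u f x (x + v) + Qf u f (x + v) x))
           + (Gf u f x (x - v) + (Qf u f x (x - v) + Qf u f (x - v) x))) := by
        refine sum_congr rfl fun x _ => ?_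
        rw [← key u hu f x (x + v), ← key u hu f x (x - v), ← Finset.sum_add_distrib]
        exact sum_congr rfl fun η _ => by ring
    _ = (∑ x : Torus d N, Gf u f x (x + v)) + (∑ x : Torus d N, Qf u f x (x + v))
        + (∑ x : Torus d N, Qf u f (x + v) x)
        + ((∑ x : Torus d N, Gf u f x (x - v)) + (∑ x : Torus d N, Qf u f x (x - v))
           + (∑ x : Torus d N, Qf u f (x - v) x)) := by
        simp only [Finset.sum_add_distrib]; ring
    _ = (∑ x : Torus d N, Gf u f x (x + v)) + (∑ x : Torus d N, Qf u f x (x + v))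
        + (∑ x : Torus d N, Qf u f x (x - v))
        + ((∑ x : Torus d N, Gf u f x (x - v)) + (∑ x : Torus d N, Qf u f x (x - v))
           + (∑ x : Torus d N, Qf u f x (x + v))) := by rw [s1, s2]
    _ = ∑ x : Torus d N, (Gf u f x (x + v) + Gf u f x (x - v)
          + 2 * Qf u f x (x + v) + 2 * Qf u f x (x - v)) := by
        simp only [Finset.sum_add_distrib, ← Finset.mul_sum]; ring
    _ = _ := Eq.symm (sum_congr rfl fun x _ => hgq x)

end KawasakiAux

/-- Lemma 2.4: `L_K^{*,ν} 1 = -(1/2) Σ_{|x-y|=1} (u_y-u_x)² ω_x ω_y + Σ_x (Δu)_x ω_x`,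
stated in its (equivalent) weak form: for every function `f` on `X_N`,
`Σ_η (L_K f)(η) ν(η) = Σ_η [RHS](η) f(η) ν(η)`. -/
theorem kawasaki_adjoint_one (d N : ℕ) [NeZero N] (hd : 1 ≤ d)
    (u : Torus d N → ℝ) (hu : ∀ x, u x ∈ Set.Ioo (0:ℝ) 1)
    (f : Config d N → ℝ) :
    ∑ η : Config d N, kawasaki f η * bern u η
      = ∑ η : Config d N,
          (-(1/2) * (∑ x : Torus d N, ∑ i : Fin d,
              ((u (x + uvec d N i) - u x)^2 * omg u x η * omg u (x + uvec d N i) η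
               + (u (x - uvec d N i) - u x)^2 * omg u x η * omg u (x - uvec d N i) η))
           + ∑ x : Torus d N,
              (∑ i : Fin d, (u (x + uvec d N i) + u (x - uvec d N i) - 2 * u x)) * omg u x η)
          * f η * bern u η := by

  have hL : ∑ η : Config d N, kawasaki f η * bern u η
      = ∑ i : Fin d, ∑ x : Torus d N, ∑ η : Config d N,
          (1/2 : ℝ) * (((f (swapC x (x + uvec d N i) η) - f η)
            + (f (swapC x (x - uvec d N i) η) - f η)) * bern u η) := by
    calc ∑ η : Config d N, kawasaki f η * bern u η
        = ∑ η : Config d N, ∑ x : Torus d N, ∑ i : Fin d,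
            (1/2 : ℝ) * (((f (swapC x (x + uvec d N i) η) - f η)
              + (f (swapC x (x - uvec d N i) η) - f η)) * bern u η) :=
          sum_congr rfl fun η _ => by
            simp only [kawasaki, Finset.sum_mul, Finset.mul_sum, mul_assoc]
      _ = ∑ x : Torus d N, ∑ i : Fin d, ∑ η : Config d N,
            (1/2 : ℝ) * (((f (swapC x (x + uvec d N i) η) - f η)
              + (f (swapC x (x - uvec d N i) η) - f η)) * bern u η) := sum_rot _
      _ = _ := Finset.sum_comm
  have hR : (∑ η : Config d N,
          (-(1/2) * (∑ x : Torus d N, ∑ i : Fin d,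
              ((u (x + uvec d N i) - u x)^2 * omg u x η * omg u (x + uvec d N i) η
               + (u (x - uvec d N i) - u x)^2 * omg u x η * omg u (x - uvec d N i) η))
           + ∑ x : Torus d N,
              (∑ i : Fin d, (u (x + uvec d N i) + u (x - uvec d N i) - 2 * u x)) * omg u x η)
          * f η * bern u η)
      = ∑ i : Fin d, ∑ x : Torus d N, ∑ η : Config d N,
          ((-(1/2 : ℝ)) * ((u (x + uvec d N i) - u x)^2 * omg u x η * omg u (x + uvec d N i) η
               + (u (x - uvec d N i) - u x)^2 * omg u x η * omg u (x - uvec d N i) η)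
           + (u (x + uvec d N i) + u (x - uvec d N i) - 2 * u x) * omg u x η)
          * (f η * bern u η) := by
    calc (∑ η : Config d N,
          (-(1/2) * (∑ x : Torus d N, ∑ i : Fin d,
              ((u (x + uvec d N i) - u x)^2 * omg u x η * omg u (x + uvec d N i) η
               + (u (x - uvec d N i) - u x)^2 * omg u x η * omg u (x - uvec d N i) η))
           + ∑ x : Torus d N,
              (∑ i : Fin d, (u (x + uvec d N i) + u (x - uvec d N i) - 2 * u x)) * omg u x η)
          * f η * bern u η)
        = ∑ η : Config d N, ∑ x : Torus d N, ∑ i : Fin d,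
            ((-(1/2 : ℝ)) * ((u (x + uvec d N i) - u x)^2 * omg u x η * omg u (x + uvec d N i) η
               + (u (x - uvec d N i) - u x)^2 * omg u x η * omg u (x - uvec d N i) η)
             + (u (x + uvec d N i) + u (x - uvec d N i) - 2 * u x) * omg u x η)
            * (f η * bern u η) := by
          refine sum_congr rfl fun η _ => ?_
          simp only [add_mul, Finset.sum_mul, Finset.mul_sum, mul_assoc,
            ← Finset.sum_add_distrib]
      _ = ∑ x : Torus d N, ∑ i : Fin d, ∑ η : Config d N,
            ((-(1/2 : ℝ)) * ((u (x + uvec d N i) - u x)^2 * omg u x η * omg u (x + uvec d N i) η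
               + (u (x - uvec d N i) - u x)^2 * omg u x η * omg u (x - uvec d N i) η)
             + (u (x + uvec d N i) + u (x - uvec d N i) - 2 * u x) * omg u x η)
            * (f η * bern u η) := sum_rot _
      _ = _ := Finset.sum_comm
  rw [hL, hR]
  refine sum_congr rfl fun i _ => ?_
  have h := per_dir u hu f (uvec d N i)
  calc ∑ x : Torus d N, ∑ η : Config d N,
        (1/2 : ℝ) * (((f (swapC x (x + uvec d N i) η) - f η)
          + (f (swapC x (x - uvec d N i) η) - f η)) * bern u η)
      = (1/2 : ℝ) * ∑ x : Torus d N, ∑ η : Config d N,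
          ((f (swapC x (x + uvec d N i) η) - f η)
            + (f (swapC x (x - uvec d N i) η) - f η)) * bern u η := by
        simp only [← Finset.mul_sum]
    _ = (1/2 : ℝ) * ∑ x : Torus d N, ∑ η : Config d N,
          (-((u (x + uvec d N i) - u x)^2 * omg u x η * omg u (x + uvec d N i) η
             + (u (x - uvec d N i) - u x)^2 * omg u x η * omg u (x - uvec d N i) η)
           + 2 * ((u (x + uvec d N i) + u (x - uvec d N i) - 2 * u x) * omg u x η))
          * (f η * bern u η) := by rw [h]
    _ = _ := by
        simp only [Finset.mul_sum]
        exact sum_congr rfl fun x _ => sum_congr rfl fun η _ => by ring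
end

section
/- Intermediate step of the flow construction: there exists a constant c > 0 depending only on d such that for every ℓ ∈ ℕ and every k with 1 ≤ k ≤ ℓ−1 there is a flow Ψ_k^ℓ on the nearest-neighbor graph of Λ_{k+1} connecting the uniform distribution p_k on Λ_k and the uniform distribution p_{k+1} on Λ_{k+1} with sup_{x,j} |Ψ_k^ℓ(x, x+e_j)| ≤ c k^{−d}. -/
open Finset

/-- The box `Λ_ℓ = [0, ℓ-1]^d ∩ ℤ^d`. -/
noncomputable def boxZ (d ℓ : ℕ) : Finset (Fin d → ℤ) :=
  Fintype.piFinset fun _ => Finset.Icc 0 ((ℓ : ℤ) - 1)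

/-- The `j`-th unit vector `e_j ∈ ℤ^d`. -/
def eZ (d : ℕ) (j : Fin d) : Fin d → ℤ := fun k => if k = j then 1 else 0

/-- The uniform probability distribution `p_ℓ` on `Λ_ℓ`. -/
noncomputable def punif (d ℓ : ℕ) (x : Fin d → ℤ) : ℝ :=
  if x ∈ boxZ d ℓ then ((ℓ : ℝ) ^ d)⁻¹ else 0

/-- `Φ` is a flow on the nearest-neighbour graph of `Λ_b` connecting `p` and `q`. -/
def IsFlow (d b : ℕ) (Φ : (Fin d → ℤ) → (Fin d → ℤ) → ℝ)
    (p q : (Fin d → ℤ) → ℝ) : Prop :=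
  (∀ x y, Φ x y = - Φ y x) ∧
  (∀ x y, Φ x y ≠ 0 →
    x ∈ boxZ d b ∧ y ∈ boxZ d b ∧ ∃ j : Fin d, y = x + eZ d j ∨ y = x - eZ d j) ∧
  (∀ x ∈ boxZ d b, (∑ j : Fin d, (Φ x (x + eZ d j) + Φ x (x - eZ d j))) = p x - q x)

/-! ### Auxiliary constructions -/

/-- 1D uniform density on `[0, m-1]`. -/
noncomputable def u1 (m : ℕ) (a : ℤ) : ℝ :=
  if 0 ≤ a ∧ a ≤ (m : ℤ) - 1 then ((m : ℝ))⁻¹ else 0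

/-- 1D flow (cumulative difference of two uniforms). -/
noncomputable def phi1 (k : ℕ) (a : ℤ) : ℝ :=
  if 0 ≤ a ∧ a ≤ (k : ℤ) - 1 then ((a : ℝ) + 1) / ((k : ℝ) * ((k : ℝ) + 1)) else 0

lemma phi1_sub (k : ℕ) (hk : 1 ≤ k) (a : ℤ) :
    phi1 k a - phi1 k (a - 1) = u1 k a - u1 (k + 1) a := by
  have hk0 : (k : ℝ) ≠ 0 := by positivity
  have hk1 : (k : ℝ) + 1 ≠ 0 := by positivity
  unfold phi1 u1
  push_cast
  split_ifs with h1 h2 h3 h4 h5 h6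
  · field_simp
    ring
  · exfalso; omega
  · have ha : a = 0 := by omega
    subst ha
    push_cast
    field_simp
    ring
  · exfalso; omega
  · have ha : (a : ℝ) = (k : ℝ) := by exact_mod_cast (by omega : a = (k : ℤ))
    rw [ha]
    field_simp
    ring
  · exfalso; omega
  · exfalso; omega
  · norm_num

lemma phi1_abs (k : ℕ) (hk : 1 ≤ k) (a : ℤ) : |phi1 k a| ≤ ((k : ℝ))⁻¹ := by
  have hk0 : (0 : ℝ) < (k : ℝ) := by exact_mod_cast hk
  unfold phi1
  split_ifs with h
  · obtain ⟨h0, h1⟩ := h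
    have ha0 : (0 : ℝ) ≤ (a : ℝ) := by exact_mod_cast h0
    have ha1 : (a : ℝ) ≤ (k : ℝ) - 1 := by
      have : (a : ℝ) ≤ ((k : ℤ) : ℝ) - 1 := by exact_mod_cast h1
      simpa using this
    rw [abs_of_nonneg (by positivity)]
    rw [div_le_iff₀ (by positivity)]
    have heq : ((k : ℝ))⁻¹ * ((k : ℝ) * ((k : ℝ) + 1)) = (k : ℝ) + 1 := by
      field_simp
    rw [heq]
    linarith
  · rw [abs_zero]; positivity

lemma phi1_ne_zero (k : ℕ) (a : ℤ) (h : phi1 k a ≠ 0) : 0 ≤ a ∧ a ≤ (k : ℤ) - 1 := by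
  by_contra hc
  simp [phi1, hc] at h
  omega

lemma u1_ne_zero (m : ℕ) (a : ℤ) (h : u1 m a ≠ 0) : 0 ≤ a ∧ a ≤ (m : ℤ) - 1 := by
  by_contra hc
  simp [u1, hc] at h
  omega

lemma u1_abs (m k : ℕ) (hk : 1 ≤ k) (hkm : k ≤ m) (a : ℤ) : |u1 m a| ≤ ((k : ℝ))⁻¹ := by
  have hk0 : (0 : ℝ) < (k : ℝ) := by exact_mod_cast hk
  unfold u1
  split_ifs with h
  · rw [abs_of_nonneg (by positivity)]
    exact inv_anti₀ hk0 (by exact_mod_cast hkm)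
  · rw [abs_zero]; positivity

lemma punif_eq_prod (d m : ℕ) (x : Fin d → ℤ) :
    punif d m x = ∏ i : Fin d, u1 m (x i) := by
  unfold punif boxZ u1
  by_cases h : ∀ i : Fin d, 0 ≤ x i ∧ x i ≤ (m : ℤ) - 1
  · rw [if_pos (by simpa [Fintype.mem_piFinset, Finset.mem_Icc] using h)]
    rw [Finset.prod_congr rfl (fun i _ => if_pos (h i))]
    simp [Finset.prod_const, inv_pow]
  · rw [if_neg (by simpa [Fintype.mem_piFinset, Finset.mem_Icc] using h)]
    push_neg at h
    obtain ⟨i, hi⟩ := h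
    refine (Finset.prod_eq_zero (Finset.mem_univ i) ?_).symm
    rw [if_neg]
    intro hcon
    rcases hcon with ⟨h1, h2⟩
    rcases lt_or_ge (x i) 0 with hl | hl
    · omega
    · exact absurd (hi hl) (by omega)

/-- Telescoping identity. -/
lemma telescope (a b : ℕ → ℝ) (n : ℕ) :
    ∑ j ∈ Finset.range n, (∏ i ∈ Finset.range j, a i) * (a j - b j) *
      ∏ i ∈ Finset.Ico (j + 1) n, b i
    = ∏ i ∈ Finset.range n, a i - ∏ i ∈ Finset.range n, b i := by
  have key : ∀ j ∈ Finset.range n,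
      (∏ i ∈ Finset.range j, a i) * (a j - b j) * ∏ i ∈ Finset.Ico (j + 1) n, b i
      = (∏ i ∈ Finset.range (j + 1), a i) * ∏ i ∈ Finset.Ico (j + 1) n, b i
        - (∏ i ∈ Finset.range j, a i) * ∏ i ∈ Finset.Ico j n, b i := by
    intro j hj
    rw [Finset.prod_range_succ,
      Finset.prod_eq_prod_Ico_succ_bot (Finset.mem_range.mp hj) b]
    ring
  rw [Finset.sum_congr rfl key,
    Finset.sum_range_sub (fun j => (∏ i ∈ Finset.range j, a i) * ∏ i ∈ Finset.Ico j n, b i)]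
  simp only [Finset.Ico_self, Finset.prod_empty, Finset.range_zero, mul_one, one_mul]
  rw [Finset.range_eq_Ico]

/-- Extension of `x : Fin d → ℤ` to `ℕ`. -/
def vext (d : ℕ) (x : Fin d → ℤ) (i : ℕ) : ℤ := if h : i < d then x ⟨i, h⟩ else 0

lemma vext_coe (d : ℕ) (x : Fin d → ℤ) (i : Fin d) : vext d x i = x i := by
  simp [vext, i.isLt]

/-- Edge flow in direction `j` out of `x`. -/
noncomputable def Fflow (d k : ℕ) (x : Fin d → ℤ) (j : Fin d) : ℝ :=
  (∏ i ∈ Finset.range j.1, u1 k (vext d x i)) * phi1 k (x j) *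
    ∏ i ∈ Finset.Ico (j.1 + 1) d, u1 (k + 1) (vext d x i)

/-- The flow function. -/
noncomputable def Psi (d k : ℕ) (x y : Fin d → ℤ) : ℝ :=
  (∑ j : Fin d, if y = x + eZ d j then Fflow d k x j else 0)
  - (∑ j : Fin d, if x = y + eZ d j then Fflow d k y j else 0)

lemma eZ_apply_self {d : ℕ} (j : Fin d) : eZ d j j = 1 := if_pos rfl

lemma eZ_apply_ne {d : ℕ} {i j : Fin d} (h : i ≠ j) : eZ d j i = 0 := if_neg h

lemma add_eZ_inj {d : ℕ} {x : Fin d → ℤ} {j j' : Fin d}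
    (h : x + eZ d j = x + eZ d j') : j = j' := by
  by_contra hne
  have h2 := congrFun h j
  rw [Pi.add_apply, Pi.add_apply, eZ_apply_self, eZ_apply_ne hne] at h2
  omega

lemma Psi_add (d k : ℕ) (x : Fin d → ℤ) (j : Fin d) :
    Psi d k x (x + eZ d j) = Fflow d k x j := by
  unfold Psi
  rw [Finset.sum_eq_single j, if_pos rfl]
  · rw [sub_eq_self]
    refine Finset.sum_eq_zero fun j' _ => ?_
    rw [if_neg]
    intro hc
    have := congrFun hc j'
    simp [eZ] at this
    split_ifs at this <;> omega
  · intro j' _ hne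
    rw [if_neg]
    intro hc
    exact hne (add_eZ_inj hc).symm
  · intro h; exact absurd (Finset.mem_univ j) h

lemma Psi_sub (d k : ℕ) (x : Fin d → ℤ) (j : Fin d) :
    Psi d k x (x - eZ d j) = - Fflow d k (x - eZ d j) j := by
  unfold Psi
  have h1 : (∑ j' : Fin d, if x - eZ d j = x + eZ d j' then Fflow d k x j' else 0) = 0 := by
    refine Finset.sum_eq_zero fun j' _ => ?_
    rw [if_neg]
    intro hc
    have := congrFun hc j'
    simp [eZ] at this
    split_ifs at this <;> omega
  rw [h1, zero_sub, Finset.sum_eq_single j, if_pos]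
  · funext i
    simp
  · intro j' _ hne
    rw [if_neg]
    intro hc
    have := congrFun hc j'
    simp [eZ] at this
    rcases eq_or_ne j' j with h | h
    · exact hne h
    · rw [if_neg h] at this; omega
  · intro h; exact absurd (Finset.mem_univ j) h

lemma vext_sub_eZ (d : ℕ) (x : Fin d → ℤ) (j : Fin d) (i : ℕ) (hij : i ≠ j.1) :
    vext d (x - eZ d j) i = vext d x i := by
  unfold vext
  split_ifs with h
  · have : (⟨i, h⟩ : Fin d) ≠ j := by
      intro hc; exact hij (by rw [← hc])
    simp [eZ, this]
  · rfl

lemma Fflow_sub_eZ_apply (d : ℕ) (x : Fin d → ℤ) (j : Fin d) :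
    (x - eZ d j) j = x j - 1 := by
  simp [eZ]

lemma Fflow_ne_zero (d k : ℕ) (x : Fin d → ℤ) (j : Fin d)
    (h : Fflow d k x j ≠ 0) :
    x ∈ boxZ d (k + 1) ∧ x + eZ d j ∈ boxZ d (k + 1) := by
  unfold Fflow at h
  have h1 : ∀ i ∈ Finset.range j.1, u1 k (vext d x i) ≠ 0 := by
    intro i hi
    exact Finset.prod_ne_zero_iff.mp (left_ne_zero_of_mul (left_ne_zero_of_mul h)) i hi
  have h2 : phi1 k (x j) ≠ 0 := right_ne_zero_of_mul (left_ne_zero_of_mul h)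
  have h3 : ∀ i ∈ Finset.Ico (j.1 + 1) d, u1 (k + 1) (vext d x i) ≠ 0 := by
    intro i hi
    exact Finset.prod_ne_zero_iff.mp (right_ne_zero_of_mul h) i hi
  have hbd : ∀ i : Fin d, 0 ≤ x i ∧ x i ≤ (k : ℤ) := by
    intro i
    rcases lt_trichotomy i.1 j.1 with hlt | heq | hgt
    · have := u1_ne_zero _ _ (h1 i.1 (Finset.mem_range.mpr hlt))
      rw [vext_coe] at this
      omega
    · have hij : i = j := Fin.ext heq
      have := phi1_ne_zero _ _ h2
      rw [hij]
      omega
    · have := u1_ne_zero _ _ (h3 i.1 (Finset.mem_Ico.mpr ⟨hgt, i.isLt⟩))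
      rw [vext_coe] at this
      push_cast at this
      omega
  have hxj := phi1_ne_zero _ _ h2
  constructor
  · rw [boxZ, Fintype.mem_piFinset]
    intro i
    rw [Finset.mem_Icc]
    have := hbd i
    push_cast
    omega
  · rw [boxZ, Fintype.mem_piFinset]
    intro i
    rw [Finset.mem_Icc]
    have := hbd i
    rcases eq_or_ne i j with h | h
    · subst h
      simp [eZ]
      push_cast
      omega
    · simp [eZ, h]
      push_cast
      omega

lemma Fflow_abs (d k : ℕ) (hk : 1 ≤ k) (x : Fin d → ℤ) (j : Fin d) :
    |Fflow d k x j| ≤ ((k : ℝ) ^ d)⁻¹ := by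
  have hk0 : (0 : ℝ) < (k : ℝ)⁻¹ := by
    have : (0:ℝ) < (k:ℝ) := by exact_mod_cast hk
    positivity
  unfold Fflow
  rw [abs_mul, abs_mul, abs_prod, abs_prod]
  have hb1 : (∏ i ∈ Finset.range j.1, |u1 k (vext d x i)|) ≤ ((k : ℝ))⁻¹ ^ j.1 := by
    calc (∏ i ∈ Finset.range j.1, |u1 k (vext d x i)|)
        ≤ ∏ _i ∈ Finset.range j.1, ((k : ℝ))⁻¹ :=
          Finset.prod_le_prod (fun i _ => abs_nonneg _)
            (fun i _ => u1_abs k k hk le_rfl _)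
      _ = ((k : ℝ))⁻¹ ^ j.1 := by simp
  have hb2 : (∏ i ∈ Finset.Ico (j.1 + 1) d, |u1 (k + 1) (vext d x i)|)
      ≤ ((k : ℝ))⁻¹ ^ (d - (j.1 + 1)) := by
    calc (∏ i ∈ Finset.Ico (j.1 + 1) d, |u1 (k + 1) (vext d x i)|)
        ≤ ∏ _i ∈ Finset.Ico (j.1 + 1) d, ((k : ℝ))⁻¹ :=
          Finset.prod_le_prod (fun i _ => abs_nonneg _)
            (fun i _ => u1_abs (k + 1) k hk (by omega) _)
      _ = ((k : ℝ))⁻¹ ^ (d - (j.1 + 1)) := by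
          rw [Finset.prod_const, Nat.card_Ico]
  have hb3 := phi1_abs k hk (x j)
  calc (∏ i ∈ Finset.range j.1, |u1 k (vext d x i)|) * |phi1 k (x j)| *
        ∏ i ∈ Finset.Ico (j.1 + 1) d, |u1 (k + 1) (vext d x i)|
      ≤ ((k : ℝ))⁻¹ ^ j.1 * ((k : ℝ))⁻¹ * ((k : ℝ))⁻¹ ^ (d - (j.1 + 1)) := by
        apply mul_le_mul
        · apply mul_le_mul hb1 hb3 (abs_nonneg _) (by positivity)
        · exact hb2
        · exact Finset.prod_nonneg fun i _ => abs_nonneg _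
        · positivity
    _ = ((k : ℝ) ^ d)⁻¹ := by
        rw [← pow_succ, ← pow_add, ← inv_pow]
        congr 1
        have := j.isLt
        omega

lemma Psi_divergence (d k : ℕ) (hk : 1 ≤ k) (x : Fin d → ℤ) :
    (∑ j : Fin d, (Psi d k x (x + eZ d j) + Psi d k x (x - eZ d j)))
      = punif d k x - punif d (k + 1) x := by
  have hterm : ∀ j : Fin d,
      Psi d k x (x + eZ d j) + Psi d k x (x - eZ d j)
      = (∏ i ∈ Finset.range j.1, u1 k (vext d x i)) *
          (u1 k (vext d x j.1) - u1 (k + 1) (vext d x j.1)) *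
          ∏ i ∈ Finset.Ico (j.1 + 1) d, u1 (k + 1) (vext d x i) := by
    intro j
    rw [Psi_add, Psi_sub]
    unfold Fflow
    have e1 : ∀ i ∈ Finset.range j.1, u1 k (vext d (x - eZ d j) i) = u1 k (vext d x i) := by
      intro i hi
      rw [vext_sub_eZ d x j i (by have := Finset.mem_range.mp hi; omega)]
    have e2 : ∀ i ∈ Finset.Ico (j.1 + 1) d,
        u1 (k + 1) (vext d (x - eZ d j) i) = u1 (k + 1) (vext d x i) := by
      intro i hi
      rw [vext_sub_eZ d x j i (by have := Finset.mem_Ico.mp hi; omega)]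
    rw [Finset.prod_congr rfl e1, Finset.prod_congr rfl e2, Fflow_sub_eZ_apply]
    rw [vext_coe]
    have := phi1_sub k hk (x j)
    linear_combination (∏ i ∈ Finset.range j.1, u1 k (vext d x i)) *
      (∏ i ∈ Finset.Ico (j.1 + 1) d, u1 (k + 1) (vext d x i)) * this
  rw [Finset.sum_congr rfl (fun j _ => hterm j)]
  rw [Fin.sum_univ_eq_sum_range (fun jn =>
    (∏ i ∈ Finset.range jn, u1 k (vext d x i)) *
      (u1 k (vext d x jn) - u1 (k + 1) (vext d x jn)) *
      ∏ i ∈ Finset.Ico (jn + 1) d, u1 (k + 1) (vext d x i)) d]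
  rw [telescope]
  rw [punif_eq_prod, punif_eq_prod]
  rw [← Fin.prod_univ_eq_prod_range (fun i => u1 k (vext d x i)) d,
    ← Fin.prod_univ_eq_prod_range (fun i => u1 (k + 1) (vext d x i)) d]
  simp only [vext_coe]

/-- Intermediate step of the flow construction (proof of Lemma 3.2): there is `c > 0`
depending only on `d` such that for every `ℓ` and `1 ≤ k ≤ ℓ - 1` there is a flow `Ψ_k^ℓ`
on `Λ_{k+1}` connecting the uniform distributions `p_k` and `p_{k+1}` with
`sup_{x,j} |Ψ_k^ℓ(x, x+e_j)| ≤ c k^{-d}`. -/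
theorem flow_construction_step (d : ℕ) (hd : 1 ≤ d) :
    ∃ c : ℝ, 0 < c ∧ ∀ ℓ k : ℕ, 1 ≤ k → k ≤ ℓ - 1 →
      ∃ Ψ : (Fin d → ℤ) → (Fin d → ℤ) → ℝ,
        IsFlow d (k + 1) Ψ (punif d k) (punif d (k + 1)) ∧
        ∀ (x : Fin d → ℤ) (j : Fin d), |Ψ x (x + eZ d j)| ≤ c * ((k : ℝ) ^ d)⁻¹ := by
  refine ⟨1, one_pos, fun ℓ k hk _ => ⟨Psi d k, ⟨?_, ?_, ?_⟩, ?_⟩⟩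
  · intro x y
    unfold Psi
    ring
  · intro x y hxy
    have hcases : (∃ j, y = x + eZ d j ∧ Fflow d k x j ≠ 0) ∨
        (∃ j, x = y + eZ d j ∧ Fflow d k y j ≠ 0) := by
      by_contra hc
      push_neg at hc
      obtain ⟨hc1, hc2⟩ := hc
      apply hxy
      unfold Psi
      rw [Finset.sum_eq_zero, Finset.sum_eq_zero, sub_zero]
      · intro j _
        split_ifs with h
        · exact hc2 j h
        · rfl
      · intro j _
        split_ifs with h
        · exact hc1 j h
        · rfl
    rcases hcases with ⟨j, hy, hF⟩ | ⟨j, hx, hF⟩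
    · obtain ⟨hb1, hb2⟩ := Fflow_ne_zero d k x j hF
      exact ⟨hb1, hy ▸ hb2, j, Or.inl hy⟩
    · obtain ⟨hb1, hb2⟩ := Fflow_ne_zero d k y j hF
      have hyx : y = x - eZ d j := by rw [hx]; abel
      exact ⟨hx ▸ hb2, hb1, j, Or.inr hyx⟩
  · intro x _
    exact Psi_divergence d k hk x
  · intro x j
    rw [Psi_add, one_mul]
    exact Fflow_abs d k hk x j
end

section
/- Integration by parts under an inhomogeneous Bernoulli measure: let 0 < u_- < u_+ < 1. There exists C = C_{u_-,u_+} > 0 such that the following holds. Let ν = ν_{u(·)} be the product Bernoulli measure on X_N with means u, let x, y ∈ T_N^d with |x−y| = 1 and u_x, u_y ∈ [u_-, u_+], let h be a function on X_N satisfying h(η^{x,y}) = h(η) for all η, and let f ≥ 0 be a probability density with respect to ν. Then ∫ h (η_y − η_x) f dν = ∫ h(η) η_x ( f(η^{x,y}) − f(η) ) dν + R₁, where the error satisfies |R₁| ≤ C |u_x − u_y| ∫ |h| f dν. -/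
open Finset

/-- Lemma 3.3 (Integration by parts): there is `C = C_{u_-,u_+} > 0` such that for every
inhomogeneous Bernoulli measure `ν = ν_{u(·)}`, every nearest-neighbour pair `x,y` with
`u_x, u_y ∈ [u_-,u_+]`, every `h` invariant under the swap `η ↦ η^{x,y}` and every probability
density `f` w.r.t. `ν`,
`∫ h (η_y - η_x) f dν = ∫ h η_x (f(η^{x,y}) - f(η)) dν + R₁` with
`|R₁| ≤ C |u_x - u_y| ∫ |h| f dν`. -/
theorem integration_by_parts (um up : ℝ) (h0m : 0 < um) (hmp : um < up) (hp1 : up < 1) :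
    ∃ C : ℝ, 0 < C ∧
      ∀ (d N : ℕ) [NeZero N], 1 ≤ d →
      ∀ (u : Torus d N → ℝ), (∀ z, u z ∈ Set.Icc (0:ℝ) 1) →
      ∀ (x y : Torus d N), (∃ i : Fin d, y = x + uvec d N i ∨ y = x - uvec d N i) →
      u x ∈ Set.Icc um up → u y ∈ Set.Icc um up →
      ∀ (h : Config d N → ℝ), (∀ η, h (swapC x y η) = h η) →
      ∀ (f : Config d N → ℝ), (∀ η, 0 ≤ f η) →
        (∑ η : Config d N, f η * bern u η = 1) →
        |(∑ η : Config d N, h η * (bval (η y) - bval (η x)) * f η * bern u η)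
          - ∑ η : Config d N, h η * bval (η x) * (f (swapC x y η) - f η) * bern u η|
          ≤ C * |u x - u y| * ∑ η : Config d N, |h η| * f η * bern u η := by
  have hup1 : 0 < 1 - up := by linarith
  have hum : 0 < um * (1 - up) := by positivity
  refine ⟨1 / (um * (1 - up)), by positivity, ?_⟩
  intro d N _ hd u hu x y hxy hux huy h hhs f hf hfint
  set C := 1 / (um * (1 - up)) with hCdef
  have hC0 : 0 < C := by positivity
  have hCmul : C * (um * (1 - up)) = 1 := by
    rw [hCdef]; exact one_div_mul_cancel hum.ne'
  by_cases hxyne : x = y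
  · subst hxyne
    have hsid : ∀ η : Config d N, swapC x x η = η := by
      intro η; funext z; simp [swapC]
    simp [hsid, sub_self]
  · -- x ≠ y
    have hyx : y ≠ x := fun hcon => hxyne hcon.symm
    have hSS : ∀ η, swapC x y (swapC x y η) = η := by
      intro η; funext z; simp [swapC]
    have hinv : Function.Involutive (swapC x y) := hSS
    have reidx : ∀ F : Config d N → ℝ, ∑ η, F (swapC x y η) = ∑ η, F η := by
      intro F
      exact Fintype.sum_bijective _ hinv.bijective _ F (fun _ => rfl)
    have hSx : ∀ η : Config d N, swapC x y η x = η y := by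
      intro η; simp [swapC]
    have hSy : ∀ η : Config d N, swapC x y η y = η x := by
      intro η; simp [swapC]
    set s : Finset (Torus d N) := (univ.erase x).erase y with hs
    have hys : y ∈ univ.erase x := Finset.mem_erase.2 ⟨hyx, Finset.mem_univ y⟩
    have hb : ∀ η : Config d N, bern u η =
        (if η x then u x else 1 - u x) *
          ((if η y then u y else 1 - u y) * ∏ z ∈ s, (if η z then u z else 1 - u z)) := by
      intro η
      rw [bern, ← Finset.mul_prod_erase univ _ (Finset.mem_univ x),
        ← Finset.mul_prod_erase _ _ hys]
    have hprodswap : ∀ η : Config d N,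
        (∏ z ∈ s, (if swapC x y η z then u z else 1 - u z)) =
          ∏ z ∈ s, (if η z then u z else 1 - u z) := by
      intro η
      refine Finset.prod_congr rfl fun z hz => ?_
      rw [hs, Finset.mem_erase, Finset.mem_erase] at hz
      have hz1 : z ≠ x := hz.2.1
      have hz2 : z ≠ y := hz.1
      rw [show swapC x y η z = η z by simp [swapC, Equiv.swap_apply_of_ne_of_ne hz1 hz2]]
    have hbS : ∀ η : Config d N, bern u (swapC x y η) =
        (if η y then u x else 1 - u x) *
          ((if η x then u y else 1 - u y) * ∏ z ∈ s, (if η z then u z else 1 - u z)) := by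
      intro η
      rw [hb (swapC x y η), hSx, hSy, hprodswap]
    have hP : ∀ η : Config d N, 0 ≤ ∏ z ∈ s, (if η z then u z else 1 - u z) := by
      intro η
      refine Finset.prod_nonneg fun z _ => ?_
      rcases (hu z) with ⟨h1, h2⟩
      split <;> linarith
    have bern_nonneg : ∀ η : Config d N, 0 ≤ bern u η := by
      intro η
      refine Finset.prod_nonneg fun z _ => ?_
      rcases (hu z) with ⟨h1, h2⟩
      split <;> linarith
    -- pointwise bound
    have hpt : ∀ η : Config d N,
        |h η * bval (η x) * f (swapC x y η) * (bern u (swapC x y η) - bern u η)|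
          ≤ C * |u x - u y| *
            (|h (swapC x y η)| * f (swapC x y η) * bern u (swapC x y η)) := by
      intro η
      rw [hhs]
      have hrhsfac : 0 ≤ |h η| * f (swapC x y η) * bern u (swapC x y η) :=
        mul_nonneg (mul_nonneg (abs_nonneg _) (hf _)) (bern_nonneg _)
      rcases Bool.eq_false_or_eq_true (η x) with hx | hx
      · -- η x = true
        rcases Bool.eq_false_or_eq_true (η y) with hy | hy
        · -- η y = true
          have heq : bern u (swapC x y η) - bern u η = 0 := by
            rw [hb η, hbS η, hx, hy]; ring
          rw [heq, mul_zero, abs_zero]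
          exact mul_nonneg (mul_nonneg hC0.le (abs_nonneg _)) hrhsfac
        · -- η y = false : main case
          rw [hb η, hbS η]
          simp only [hx, hy, bval, if_true, if_false, Bool.false_eq_true, mul_one]
          set a := u x with ha
          set b := u y with hbdef
          set P := ∏ z ∈ s, (if η z = true then u z else 1 - u z) with hPdef
          have hP0 : 0 ≤ P := hP η
          have ham : um ≤ a := hux.1
          have hap : a ≤ up := hux.2
          have hbm : um ≤ b := huy.1
          have hbp : b ≤ up := huy.2
          have key2 : (1 - a) * (b * P) - a * ((1 - b) * P) = (b - a) * P := by ring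
          rw [key2]
          have h3 : 1 ≤ C * ((1 - a) * b) := by
            have hle : um * (1 - up) ≤ (1 - a) * b := by nlinarith
            calc (1:ℝ) = C * (um * (1 - up)) := hCmul.symm
              _ ≤ C * ((1 - a) * b) := mul_le_mul_of_nonneg_left hle hC0.le
          have h2 : |b - a| * P ≤ C * |a - b| * ((1 - a) * (b * P)) := by
            rw [abs_sub_comm]
            nlinarith [mul_nonneg (abs_nonneg (a - b)) hP0, h3]
          calc |h η * f (swapC x y η) * ((b - a) * P)|
              = (|h η| * f (swapC x y η)) * (|b - a| * P) := by
                rw [abs_mul, abs_mul, abs_mul, abs_of_nonneg (hf _), abs_of_nonneg hP0]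
            _ ≤ (|h η| * f (swapC x y η)) * (C * |a - b| * ((1 - a) * (b * P))) :=
                mul_le_mul_of_nonneg_left h2 (mul_nonneg (abs_nonneg _) (hf _))
            _ = C * |a - b| * (|h η| * f (swapC x y η) * ((1 - a) * (b * P))) := by ring
      · -- η x = false
        simp only [hx, bval, Bool.false_eq_true, if_false, mul_zero, zero_mul, abs_zero]
        exact mul_nonneg (mul_nonneg hC0.le (abs_nonneg _)) hrhsfac
    -- the algebraic identity
    have key : (∑ η : Config d N, h η * (bval (η y) - bval (η x)) * f η * bern u η)
          - ∑ η : Config d N, h η * bval (η x) * (f (swapC x y η) - f η) * bern u η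
        = ∑ η : Config d N,
            h η * bval (η x) * f (swapC x y η) * (bern u (swapC x y η) - bern u η) := by
      have h1 : ∑ η : Config d N, h η * bval (η y) * (f η * bern u η)
          = ∑ η : Config d N,
              h η * bval (η x) * (f (swapC x y η) * bern u (swapC x y η)) := by
        rw [← reidx (fun ζ => h ζ * bval (ζ y) * (f ζ * bern u ζ))]
        refine Finset.sum_congr rfl fun η _ => ?_
        simp only [hhs, hSy]
      calc (∑ η : Config d N, h η * (bval (η y) - bval (η x)) * f η * bern u η)
            - ∑ η : Config d N, h η * bval (η x) * (f (swapC x y η) - f η) * bern u η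
          = ∑ η : Config d N,
              (h η * (bval (η y) - bval (η x)) * f η * bern u η
                - h η * bval (η x) * (f (swapC x y η) - f η) * bern u η) := by
            rw [Finset.sum_sub_distrib]
        _ = ∑ η : Config d N,
              (h η * bval (η y) * (f η * bern u η)
                - h η * bval (η x) * (f (swapC x y η) * bern u η)) := by
            refine Finset.sum_congr rfl fun η _ => ?_; ring
        _ = (∑ η : Config d N, h η * bval (η y) * (f η * bern u η))
              - ∑ η : Config d N, h η * bval (η x) * (f (swapC x y η) * bern u η) := by
            rw [Finset.sum_sub_distrib]
        _ = (∑ η : Config d N, h η * bval (η x) * (f (swapC x y η) * bern u (swapC x y η)))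
              - ∑ η : Config d N, h η * bval (η x) * (f (swapC x y η) * bern u η) := by
            rw [h1]
        _ = ∑ η : Config d N,
              (h η * bval (η x) * (f (swapC x y η) * bern u (swapC x y η))
                - h η * bval (η x) * (f (swapC x y η) * bern u η)) := by
            rw [Finset.sum_sub_distrib]
        _ = ∑ η : Config d N,
              h η * bval (η x) * f (swapC x y η) * (bern u (swapC x y η) - bern u η) := by
            refine Finset.sum_congr rfl fun η _ => ?_; ring
    rw [key]
    calc |∑ η : Config d N,
            h η * bval (η x) * f (swapC x y η) * (bern u (swapC x y η) - bern u η)|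
        ≤ ∑ η : Config d N,
            |h η * bval (η x) * f (swapC x y η) * (bern u (swapC x y η) - bern u η)| :=
          Finset.abs_sum_le_sum_abs _ _
      _ ≤ ∑ η : Config d N, C * |u x - u y| *
            (|h (swapC x y η)| * f (swapC x y η) * bern u (swapC x y η)) :=
          Finset.sum_le_sum fun η _ => hpt η
      _ = C * |u x - u y| * ∑ η : Config d N,
            |h (swapC x y η)| * f (swapC x y η) * bern u (swapC x y η) := by
          rw [Finset.mul_sum]
      _ = C * |u x - u y| * ∑ η : Config d N, |h η| * f η * bern u η := by
          rw [reidx (fun ζ => |h ζ| * f ζ * bern u ζ)]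
end

section
/- Concentration inequality: let X₁, …, X_n be independent real random variables with X_i taking values in the interval [a_i, b_i]. Set X̄_i = X_i − E[X_i] and σ̄² = Σ_{i=1}^n (b_i − a_i)². Then for every γ ∈ [0, (σ̄²)^{-1}], log E[ exp( γ (Σ_{i=1}^n X̄_i)² ) ] ≤ 2 γ σ̄² (and in particular this logarithm is at most 2). -/
open MeasureTheory ProbabilityTheory

lemma hoeff_pos {p : ℝ} (hp0 : 0 ≤ p) (hp1 : p ≤ 1) (x : ℝ) :
    0 < 1 - p + p * Real.exp x := by
  rcases eq_or_lt_of_le hp0 with hp | hp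
  · simp [← hp]
  · nlinarith [Real.exp_pos x]

lemma hoeff_scalar {p : ℝ} (hp0 : 0 ≤ p) (hp1 : p ≤ 1) (h : ℝ) :
    Real.log (1 - p + p * Real.exp h) ≤ p * h + h ^ 2 / 8 := by
  set D : ℝ → ℝ := fun x => 1 - p + p * Real.exp x with hD
  have hDpos : ∀ x, 0 < D x := fun x => hoeff_pos hp0 hp1 x
  set q : ℝ → ℝ := fun x => p * Real.exp x / D x with hq
  -- derivative facts
  have hDderiv : ∀ x, HasDerivAt D (p * Real.exp x) x := by
    intro x
    exact ((Real.hasDerivAt_exp x).const_mul p).const_add (1 - p)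
  have hgderiv : ∀ x, HasDerivAt (fun y => Real.log (D y) - p * y) (q x - p) x := by
    intro x
    exact ((hDderiv x).log (hDpos x).ne').sub ((hasDerivAt_id x).const_mul p |>.congr_deriv (by ring))
  have hqderiv : ∀ x, HasDerivAt q (q x * (1 - q x)) x := by
    intro x
    have h1 : HasDerivAt (fun y => p * Real.exp y) (p * Real.exp x) x :=
      (Real.hasDerivAt_exp x).const_mul p
    have := h1.div (hDderiv x) (hDpos x).ne'
    refine this.congr_deriv ?_
    have := (hDpos x).ne'
    simp only [hq, hD]
    have hD1 : 1 - p + p * Real.exp x ≠ 0 := (hDpos x).ne'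
    field_simp
  have hq01 : ∀ x, 0 ≤ q x ∧ q x ≤ 1 := by
    intro x
    constructor
    · exact div_nonneg (by positivity) (hDpos x).le
    · rw [div_le_one (hDpos x)]
      simp only [hD]
      nlinarith [Real.exp_pos x]
  have hqbound : ∀ x, ‖q x * (1 - q x)‖ ≤ 1 / 4 := by
    intro x
    obtain ⟨h0, h1⟩ := hq01 x
    rw [Real.norm_eq_abs, abs_le]
    constructor <;> nlinarith [sq_nonneg (q x - 1/2)]
  have hq0 : q 0 = p := by simp [hq, hD]
  -- |q x - p| ≤ |x|/4 by MVT
  have hφ : ∀ x : ℝ, |q x - p| ≤ |x| / 4 := by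
    intro x
    have := Convex.norm_image_sub_le_of_norm_hasDerivWithin_le
      (f := q) (f' := fun y => q y * (1 - q y)) (s := Set.univ) (C := 1/4)
      (fun y _ => (hqderiv y).hasDerivWithinAt) (fun y _ => hqbound y) convex_univ
      (Set.mem_univ 0) (Set.mem_univ x)
    rw [hq0] at this
    rw [Real.norm_eq_abs, Real.norm_eq_abs] at this
    calc |q x - p| ≤ 1/4 * |x - 0| := this
      _ = |x| / 4 := by rw [sub_zero]; ring
  -- FTC
  have hcont : Continuous q := by
    apply Continuous.div
    · continuity
    · continuity
    · exact fun x => (hDpos x).ne'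
  have hφcont : Continuous (fun x => q x - p) := hcont.sub continuous_const
  have hint : ∀ a c : ℝ, IntervalIntegrable (fun x => q x - p) volume a c :=
    fun a c => hφcont.intervalIntegrable a c
  have hftc : ∫ x in (0:ℝ)..h, (q x - p) =
      (Real.log (D h) - p * h) - (Real.log (D 0) - p * 0) :=
    intervalIntegral.integral_eq_sub_of_hasDerivAt (fun x _ => hgderiv x) (hint 0 h)
  have hD0 : Real.log (D 0) = 0 := by simp [hD]
  have key : ∫ x in (0:ℝ)..h, (q x - p) ≤ h ^ 2 / 8 := by
    rcases le_or_gt 0 h with hh | hh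
    · have hmono := intervalIntegral.integral_mono_on (μ := volume) hh (hint 0 h)
        ((continuous_id.div_const 4).intervalIntegrable 0 h)
        (fun x hx => by
          calc q x - p ≤ |q x - p| := le_abs_self _
            _ ≤ |x| / 4 := hφ x
            _ = x / 4 := by rw [abs_of_nonneg hx.1])
      calc ∫ x in (0:ℝ)..h, (q x - p) ≤ ∫ x in (0:ℝ)..h, x / 4 := hmono
        _ = h ^ 2 / 8 := by
            rw [intervalIntegral.integral_div, integral_id]; ring
    · rw [intervalIntegral.integral_symm]
      have hmono := intervalIntegral.integral_mono_on (μ := volume) hh.le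
        ((continuous_id.div_const 4).intervalIntegrable h 0) (hint h 0)
        (fun x hx => by
          calc x / 4 = -(|x| / 4) := by rw [abs_of_nonpos hx.2]; ring
            _ ≤ -|q x - p| := by linarith [hφ x]
            _ ≤ q x - p := neg_abs_le _)
      simp only [id_eq] at hmono
      have h2 : ∫ x in h..(0:ℝ), x / 4 = -(h ^ 2) / 8 := by
        rw [intervalIntegral.integral_div, integral_id]; ring
      rw [h2] at hmono
      linarith
  have hfinal : Real.log (D h) ≤ p * h + h ^ 2 / 8 := by linarith
  simpa [hD] using hfinal

lemma integrable_of_abs_le {Ω : Type*} [MeasurableSpace Ω] {μ : Measure Ω} [IsFiniteMeasure μ]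
    {f : Ω → ℝ} (hf : Measurable f) (C : ℝ) (h : ∀ ω, |f ω| ≤ C) : Integrable f μ :=
  (integrable_const C).mono' hf.aestronglyMeasurable
    (Filter.Eventually.of_forall (fun ω => by simpa using h ω))

lemma hoeffding_mgf {Ω : Type*} [MeasurableSpace Ω] (μ : Measure Ω) [IsProbabilityMeasure μ]
    (Y : Ω → ℝ) (hY : Measurable Y) (c d : ℝ)
    (hb : ∀ ω, Y ω ∈ Set.Icc c d) (hm : ∫ ω, Y ω ∂μ = 0) (t : ℝ) :
    ∫ ω, Real.exp (t * Y ω) ∂μ ≤ Real.exp (t ^ 2 * (d - c) ^ 2 / 8) := by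
  have hΩ : Nonempty Ω := by
    by_contra hΩ
    rw [not_nonempty_iff] at hΩ
    have h1 : μ Set.univ = 1 := measure_univ
    rw [Set.univ_eq_empty_iff.mpr hΩ, measure_empty] at h1
    exact zero_ne_one h1
  have hcd : c ≤ d := by
    obtain ⟨ω⟩ := hΩ
    exact (hb ω).1.trans (hb ω).2
  have hYint : Integrable Y μ := by
    refine integrable_of_abs_le hY (|c| + |d|) (fun ω => ?_)
    rw [abs_le]
    constructor <;>
      nlinarith [abs_nonneg c, abs_nonneg d, le_abs_self d, neg_abs_le c, (hb ω).1, (hb ω).2]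
  have hc0 : c ≤ 0 := by
    have h1 := integral_mono (μ := μ) (integrable_const c) hYint (fun ω => (hb ω).1)
    simp only [integral_const, measure_univ, probReal_univ, one_smul, hm] at h1
    exact h1
  have hd0 : 0 ≤ d := by
    have h1 := integral_mono (μ := μ) hYint (integrable_const d) (fun ω => (hb ω).2)
    simp only [integral_const, measure_univ, probReal_univ, one_smul, hm] at h1
    exact h1
  have hexpint : Integrable (fun ω => Real.exp (t * Y ω)) μ := by
    refine integrable_of_abs_le ((hY.const_mul t).exp) (Real.exp (|t| * (|c| + |d|))) (fun ω => ?_)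
    rw [abs_of_nonneg (Real.exp_pos _).le, Real.exp_le_exp]
    calc t * Y ω ≤ |t * Y ω| := le_abs_self _
      _ = |t| * |Y ω| := abs_mul _ _
      _ ≤ |t| * (|c| + |d|) := by
          refine mul_le_mul_of_nonneg_left ?_ (abs_nonneg t)
          rw [abs_le]
          constructor <;>
            nlinarith [abs_nonneg c, abs_nonneg d, le_abs_self d, neg_abs_le c,
              (hb ω).1, (hb ω).2]
  rcases eq_or_lt_of_le hcd with heq | hlt
  · subst heq
    have hc : c = 0 := le_antisymm hc0 hd0
    subst hc
    have hY0 : ∀ ω, Y ω = 0 := fun ω => le_antisymm (hb ω).2 (hb ω).1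
    simp [hY0]
  · set p : ℝ := -c / (d - c) with hp
    have hdc : 0 < d - c := sub_pos.2 hlt
    have hp0 : 0 ≤ p := div_nonneg (neg_nonneg.2 hc0) hdc.le
    have hp1 : p ≤ 1 := by rw [hp, div_le_one hdc]; linarith
    have hpoint : ∀ ω, Real.exp (t * Y ω) ≤
        (d - Y ω) / (d - c) * Real.exp (t * c) + (Y ω - c) / (d - c) * Real.exp (t * d) := by
      intro ω
      obtain ⟨h1, h2⟩ := hb ω
      have hw1 : (0:ℝ) ≤ (d - Y ω) / (d - c) := div_nonneg (by linarith) hdc.le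
      have hw2 : (0:ℝ) ≤ (Y ω - c) / (d - c) := div_nonneg (by linarith) hdc.le
      have hsum : (d - Y ω) / (d - c) + (Y ω - c) / (d - c) = 1 := by field_simp; ring
      have hcv := convexOn_exp.2 (Set.mem_univ (t * c)) (Set.mem_univ (t * d)) hw1 hw2 hsum
      simp only [smul_eq_mul] at hcv
      have harg : (d - Y ω) / (d - c) * (t * c) + (Y ω - c) / (d - c) * (t * d) = t * Y ω := by
        field_simp
        ring
      rwa [harg] at hcv
    have hRHSint : Integrable (fun ω =>
        (d - Y ω) / (d - c) * Real.exp (t * c) + (Y ω - c) / (d - c) * Real.exp (t * d)) μ := by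
      refine Integrable.add ?_ ?_
      · exact (((integrable_const d).sub hYint).div_const (d - c)).mul_const _
      · exact ((hYint.sub (integrable_const c)).div_const (d - c)).mul_const _
    have hmono := integral_mono hexpint hRHSint hpoint
    have hRHSval : ∫ ω, ((d - Y ω) / (d - c) * Real.exp (t * c)
        + (Y ω - c) / (d - c) * Real.exp (t * d)) ∂μ
        = d / (d - c) * Real.exp (t * c) + (-c) / (d - c) * Real.exp (t * d) := by
      have hi1 : Integrable (fun ω => (d - Y ω) / (d - c) * Real.exp (t * c)) μ := by
        exact (((integrable_const d).sub hYint).div_const (d - c)).mul_const _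
      have hi2 : Integrable (fun ω => (Y ω - c) / (d - c) * Real.exp (t * d)) μ := by
        exact ((hYint.sub (integrable_const c)).div_const (d - c)).mul_const _
      rw [integral_add hi1 hi2, integral_mul_const, integral_mul_const,
        integral_div, integral_div]
      have hs1 : ∫ ω, (d - Y ω) ∂μ = d := by
        rw [integral_sub (integrable_const d) hYint, hm]
        simp [integral_const]
      have hs2 : ∫ ω, (Y ω - c) ∂μ = -c := by
        rw [integral_sub hYint (integrable_const c), hm]
        simp [integral_const]
      rw [hs1, hs2]
    rw [hRHSval] at hmono
    have hfact : d / (d - c) * Real.exp (t * c) + (-c) / (d - c) * Real.exp (t * d)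
        = Real.exp (t * c) * (1 - p + p * Real.exp (t * d - t * c)) := by
      rw [Real.exp_sub, hp]
      field_simp [Real.exp_ne_zero]
      ring
    rw [hfact] at hmono
    have hpos := hoeff_pos hp0 hp1 (t * d - t * c)
    have hsc : 1 - p + p * Real.exp (t * d - t * c)
        ≤ Real.exp (p * (t * d - t * c) + (t * d - t * c) ^ 2 / 8) := by
      calc 1 - p + p * Real.exp (t * d - t * c)
          = Real.exp (Real.log (1 - p + p * Real.exp (t * d - t * c))) := (Real.exp_log hpos).symm
        _ ≤ _ := Real.exp_le_exp.2 (hoeff_scalar hp0 hp1 _)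
    have halg : t * c + (p * (t * d - t * c) + (t * d - t * c) ^ 2 / 8)
        = t ^ 2 * (d - c) ^ 2 / 8 := by
      rw [hp]
      field_simp
      ring
    calc ∫ ω, Real.exp (t * Y ω) ∂μ
        ≤ Real.exp (t * c) * (1 - p + p * Real.exp (t * d - t * c)) := hmono
      _ ≤ Real.exp (t * c) * Real.exp (p * (t * d - t * c) + (t * d - t * c) ^ 2 / 8) :=
          mul_le_mul_of_nonneg_left hsc (Real.exp_pos _).le
      _ = Real.exp (t * c + (p * (t * d - t * c) + (t * d - t * c) ^ 2 / 8)) :=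
          (Real.exp_add _ _).symm
      _ = Real.exp (t ^ 2 * (d - c) ^ 2 / 8) := by rw [halg]

lemma integrable_exp_quad (s : ℝ) : Integrable (fun x : ℝ => Real.exp (-x ^ 2 + s * x)) := by
  have hg : Integrable (fun x : ℝ => Real.exp (s ^ 2 / 2) * Real.exp (-(1/2 : ℝ) * x ^ 2)) :=
    (integrable_exp_neg_mul_sq (by norm_num)).const_mul _
  refine hg.mono' ?_ (Filter.Eventually.of_forall fun x => ?_)
  · exact (Continuous.rexp (by continuity)).aestronglyMeasurable
  · rw [Real.norm_eq_abs, abs_of_nonneg (Real.exp_pos _).le, ← Real.exp_add, Real.exp_le_exp]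
    nlinarith [sq_nonneg (x - s)]

lemma gauss_shift (s : ℝ) :
    ∫ x : ℝ, Real.exp (-x ^ 2 + s * x) = Real.sqrt Real.pi * Real.exp (s ^ 2 / 4) := by
  have h1 : ∀ x : ℝ, Real.exp (-x ^ 2 + s * x)
      = Real.exp (-((x - s / 2) ^ 2)) * Real.exp (s ^ 2 / 4) := by
    intro x
    rw [← Real.exp_add]
    congr 1
    ring
  simp_rw [h1]
  rw [integral_mul_const]
  have h2 : ∫ x : ℝ, Real.exp (-((x - s / 2) ^ 2)) = ∫ x : ℝ, Real.exp (-(x ^ 2)) :=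
    integral_sub_right_eq_self (fun y => Real.exp (-(y ^ 2))) (s / 2)
  rw [h2]
  have h3 : ∫ x : ℝ, Real.exp (-(x ^ 2)) = Real.sqrt Real.pi := by
    have h := integral_gaussian 1
    simpa using h
  rw [h3]

/-- Lemma 3.6 (Concentration inequality, Jara–Menezes): if `X₁, …, X_n` are independent
random variables with `X_i ∈ [a_i, b_i]`, `X̄_i = X_i - E[X_i]` and
`σ̄² = Σ_i (b_i - a_i)²`, then for every `γ ∈ [0, (σ̄²)⁻¹]`,
`log E[exp(γ (Σ_i X̄_i)²)] ≤ 2 γ σ̄²`, and in particular this logarithm is at most `2`. -/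
theorem concentration_inequality {Ω : Type*} [MeasurableSpace Ω]
    (μ : Measure Ω) [IsProbabilityMeasure μ]
    (n : ℕ) (X : Fin n → Ω → ℝ) (a b : Fin n → ℝ)
    (hmeas : ∀ i, Measurable (X i))
    (hindep : iIndepFun X μ)
    (hbound : ∀ i ω, X i ω ∈ Set.Icc (a i) (b i))
    (γ : ℝ) (hγ0 : 0 ≤ γ) (hγ : γ ≤ (∑ i, (b i - a i)^2)⁻¹) :
    Real.log (∫ ω, Real.exp (γ * (∑ i, (X i ω - ∫ ω', X i ω' ∂μ))^2) ∂μ)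
      ≤ 2 * γ * ∑ i, (b i - a i)^2
    ∧ Real.log (∫ ω, Real.exp (γ * (∑ i, (X i ω - ∫ ω', X i ω' ∂μ))^2) ∂μ) ≤ 2 := by
  classical
  have hΩ : Nonempty Ω := by
    by_contra h
    rw [not_nonempty_iff] at h
    have h1 : μ Set.univ = 1 := measure_univ
    rw [Set.univ_eq_empty_iff.mpr h, measure_empty] at h1
    exact zero_ne_one h1
  set σ2 : ℝ := ∑ i, (b i - a i) ^ 2 with hσ2
  set m : Fin n → ℝ := fun i => ∫ ω', X i ω' ∂μ with hm
  set S : Ω → ℝ := fun ω => ∑ i, (X i ω - m i) with hS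
  set u : ℝ := γ * σ2 with hu
  have hσ2nn : 0 ≤ σ2 := Finset.sum_nonneg fun i _ => sq_nonneg _
  have hu0 : 0 ≤ u := mul_nonneg hγ0 hσ2nn
  have hu1 : u ≤ 1 := by
    rcases eq_or_lt_of_le hσ2nn with h | h
    · rw [hu, ← h, mul_zero]; norm_num
    · calc u = γ * σ2 := hu
        _ ≤ σ2⁻¹ * σ2 := mul_le_mul_of_nonneg_right hγ h.le
        _ = 1 := inv_mul_cancel₀ h.ne'
  have hab : ∀ i, a i ≤ b i := fun i =>
    (hbound i (Classical.arbitrary Ω)).1.trans (hbound i (Classical.arbitrary Ω)).2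
  have hXint : ∀ i, Integrable (X i) μ := by
    intro i
    refine integrable_of_abs_le (hmeas i) (|a i| + |b i|) (fun ω => ?_)
    rw [abs_le]
    constructor <;>
      nlinarith [abs_nonneg (a i), abs_nonneg (b i), le_abs_self (b i), neg_abs_le (a i),
        (hbound i ω).1, (hbound i ω).2]
  have hmi1 : ∀ i, a i ≤ m i := by
    intro i
    have h1 := integral_mono (μ := μ) (integrable_const (a i)) (hXint i)
      (fun ω => (hbound i ω).1)
    simpa [integral_const] using h1
  have hmi2 : ∀ i, m i ≤ b i := by
    intro i
    have h1 := integral_mono (μ := μ) (hXint i) (integrable_const (b i))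
      (fun ω => (hbound i ω).2)
    simpa [integral_const] using h1
  have hYmeas : ∀ i, Measurable (fun ω => X i ω - m i) := fun i => (hmeas i).sub_const _
  have hY0 : ∀ i, ∫ ω, (X i ω - m i) ∂μ = 0 := by
    intro i
    rw [integral_sub (hXint i) (integrable_const _)]
    simp [integral_const, hm]
  have hoefY : ∀ i (t : ℝ),
      ∫ ω, Real.exp (t * (X i ω - m i)) ∂μ ≤ Real.exp (t ^ 2 * (b i - a i) ^ 2 / 8) := by
    intro i t
    have h := hoeffding_mgf μ (fun ω => X i ω - m i) (hYmeas i) (a i - m i) (b i - m i)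
      (fun ω => ⟨show a i - m i ≤ X i ω - m i by linarith [(hbound i ω).1],
        show X i ω - m i ≤ b i - m i by linarith [(hbound i ω).2]⟩) (hY0 i) t
    rw [show b i - m i - (a i - m i) = b i - a i from by ring] at h
    exact h
  have hindepY : iIndepFun (fun i => fun ω => X i ω - m i) μ := by
    have h := hindep.comp (fun i (x : ℝ) => x - m i) (fun i => measurable_id.sub_const _)
    exact h
  have hSmeas : Measurable S :=
    Finset.measurable_sum Finset.univ (fun i _ => (hmeas i).sub_const _)
  have hmgfS : ∀ t : ℝ, ∫ ω, Real.exp (t * S ω) ∂μ ≤ Real.exp (t ^ 2 * σ2 / 8) := by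
    intro t
    have hsum := hindepY.mgf_sum (t := t) (fun i => hYmeas i) Finset.univ
    have hSapp : ∫ ω, Real.exp (t * S ω) ∂μ
        = mgf (∑ i, fun ω => X i ω - m i) μ t := by
      unfold mgf
      congr 1
      funext ω
      simp only [Finset.sum_apply, hS]
    rw [hSapp, hsum]
    calc ∏ i, mgf (fun ω => X i ω - m i) μ t
        ≤ ∏ i, Real.exp (t ^ 2 * (b i - a i) ^ 2 / 8) :=
          Finset.prod_le_prod (fun i _ => mgf_nonneg) (fun i _ => hoefY i t)
      _ = Real.exp (∑ i, t ^ 2 * (b i - a i) ^ 2 / 8) := (Real.exp_sum _ _).symm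
      _ = Real.exp (t ^ 2 * σ2 / 8) := by
          rw [← Finset.sum_div, ← Finset.mul_sum, hσ2]
  set M : ℝ := ∑ i, (b i - a i) with hM
  have hSb : ∀ ω, |S ω| ≤ M := by
    intro ω
    calc |S ω| ≤ ∑ i, |X i ω - m i| := Finset.abs_sum_le_sum_abs _ _
      _ ≤ ∑ i, (b i - a i) := by
          refine Finset.sum_le_sum fun i _ => ?_
          rw [abs_le]
          constructor
          · linarith [(hbound i ω).1, hmi2 i]
          · linarith [(hbound i ω).2, hmi1 i]
      _ = M := hM.symm
  have hSsq : ∀ ω, S ω ^ 2 ≤ M ^ 2 := by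
    intro ω
    have h := abs_le.1 (hSb ω)
    exact sq_le_sq' (by linarith [h.1]) h.2
  have hIexp : Integrable (fun ω => Real.exp (γ * S ω ^ 2)) μ := by
    refine integrable_of_abs_le ((hSmeas.pow_const 2).const_mul γ).exp
      (Real.exp (γ * M ^ 2)) (fun ω => ?_)
    rw [abs_of_nonneg (Real.exp_pos _).le, Real.exp_le_exp]
    exact mul_le_mul_of_nonneg_left (hSsq ω) hγ0
  have hI1 : 1 ≤ ∫ ω, Real.exp (γ * S ω ^ 2) ∂μ := by
    have h := integral_mono (μ := μ) (integrable_const 1) hIexp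
      (fun ω => Real.one_le_exp (by positivity))
    simpa [integral_const] using h
  -- Gaussian step
  set k : ℝ := 2 * Real.sqrt γ with hk
  have hk2 : k ^ 2 = 4 * γ := by
    rw [hk, mul_pow, Real.sq_sqrt hγ0]; ring
  have hGpoint : ∀ ω, ∫ x : ℝ, Real.exp (-x ^ 2 + (k * S ω) * x)
      = Real.sqrt Real.pi * Real.exp (γ * S ω ^ 2) := by
    intro ω
    rw [gauss_shift (k * S ω)]
    congr 1
    rw [mul_pow, hk2]
    ring
  have hFmeas : AEStronglyMeasurable
      (Function.uncurry fun (ω : Ω) (x : ℝ) => Real.exp (-x ^ 2 + (k * S ω) * x))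
      (μ.prod volume) := by
    apply Measurable.aestronglyMeasurable
    apply Measurable.exp
    exact ((measurable_snd.pow_const 2).neg.add
      (((hSmeas.comp measurable_fst).const_mul k).mul measurable_snd))
  have hFint : Integrable
      (Function.uncurry fun (ω : Ω) (x : ℝ) => Real.exp (-x ^ 2 + (k * S ω) * x))
      (μ.prod volume) := by
    rw [integrable_prod_iff hFmeas]
    constructor
    · exact Filter.Eventually.of_forall fun ω => integrable_exp_quad (k * S ω)
    · have heq : (fun ω => ∫ x : ℝ, ‖Real.exp (-x ^ 2 + (k * S ω) * x)‖)
          = fun ω => Real.sqrt Real.pi * Real.exp (γ * S ω ^ 2) := by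
        funext ω
        simp_rw [Real.norm_eq_abs, abs_of_nonneg (Real.exp_pos _).le]
        exact hGpoint ω
      have h2 : Integrable (fun ω => Real.sqrt Real.pi * Real.exp (γ * S ω ^ 2)) μ :=
        hIexp.const_mul _
      exact h2.congr (Filter.Eventually.of_forall fun ω => (congrFun heq ω).symm)
  have hswap := integral_integral_swap hFint
  have hLHS : ∫ ω, (∫ x : ℝ, Real.exp (-x ^ 2 + (k * S ω) * x)) ∂μ
      = Real.sqrt Real.pi * ∫ ω, Real.exp (γ * S ω ^ 2) ∂μ := by
    simp_rw [hGpoint]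
    rw [integral_const_mul]
  have hr : (0 : ℝ) < 1 - u / 2 := by linarith
  have hRHS : ∫ x : ℝ, (∫ ω, Real.exp (-x ^ 2 + (k * S ω) * x) ∂μ)
      ≤ ∫ x : ℝ, Real.exp (-(1 - u / 2) * x ^ 2) := by
    refine integral_mono_of_nonneg
      (Filter.Eventually.of_forall fun x => integral_nonneg fun ω => (Real.exp_pos _).le)
      (integrable_exp_neg_mul_sq hr)
      (Filter.Eventually.of_forall fun x => ?_)
    have h1 : ∀ ω, Real.exp (-x ^ 2 + (k * S ω) * x)
        = Real.exp ((k * x) * S ω) * Real.exp (-x ^ 2) := by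
      intro ω
      rw [← Real.exp_add]
      congr 1
      ring
    calc ∫ ω, Real.exp (-x ^ 2 + (k * S ω) * x) ∂μ
        = (∫ ω, Real.exp ((k * x) * S ω) ∂μ) * Real.exp (-x ^ 2) := by
          simp_rw [h1]; rw [integral_mul_const]
      _ ≤ Real.exp ((k * x) ^ 2 * σ2 / 8) * Real.exp (-x ^ 2) :=
          mul_le_mul_of_nonneg_right (hmgfS (k * x)) (Real.exp_pos _).le
      _ = Real.exp (-(1 - u / 2) * x ^ 2) := by
          rw [← Real.exp_add]
          congr 1
          rw [mul_pow, hk2, hu]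
          ring
  have hgauss2 : ∫ x : ℝ, Real.exp (-(1 - u / 2) * x ^ 2) = Real.sqrt (Real.pi / (1 - u / 2)) :=
    integral_gaussian _
  have hsqrt : Real.sqrt (Real.pi / (1 - u / 2)) ≤ Real.sqrt Real.pi * Real.exp (2 * u) := by
    have he : 1 + 4 * u ≤ Real.exp (4 * u) := by linarith [Real.add_one_le_exp (4 * u)]
    have h3 : (1 : ℝ) ≤ (1 + 4 * u) * (1 - u / 2) := by nlinarith
    have hsq : Real.pi / (1 - u / 2) ≤ Real.pi * (Real.exp (2 * u)) ^ 2 := by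
      rw [div_le_iff₀ hr]
      have h2 : (Real.exp (2 * u)) ^ 2 = Real.exp (4 * u) := by
        rw [sq, ← Real.exp_add]
        norm_num
        ring_nf
      rw [h2]
      calc Real.pi = Real.pi * 1 := (mul_one Real.pi).symm
        _ ≤ Real.pi * ((1 + 4 * u) * (1 - u / 2)) := by
            exact mul_le_mul_of_nonneg_left h3 Real.pi_pos.le
        _ ≤ Real.pi * (Real.exp (4 * u) * (1 - u / 2)) := by
            refine mul_le_mul_of_nonneg_left ?_ Real.pi_pos.le
            exact mul_le_mul_of_nonneg_right he hr.le
        _ = Real.pi * Real.exp (4 * u) * (1 - u / 2) := by ring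
    calc Real.sqrt (Real.pi / (1 - u / 2)) ≤ Real.sqrt (Real.pi * (Real.exp (2 * u)) ^ 2) :=
          Real.sqrt_le_sqrt hsq
      _ = Real.sqrt Real.pi * Real.exp (2 * u) := by
          rw [Real.sqrt_mul Real.pi_pos.le, Real.sqrt_sq (Real.exp_pos _).le]
  have hkey : ∫ ω, Real.exp (γ * S ω ^ 2) ∂μ ≤ Real.exp (2 * u) := by
    have hchain : Real.sqrt Real.pi * ∫ ω, Real.exp (γ * S ω ^ 2) ∂μ
        ≤ Real.sqrt Real.pi * Real.exp (2 * u) := by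
      calc Real.sqrt Real.pi * ∫ ω, Real.exp (γ * S ω ^ 2) ∂μ
          = ∫ ω, (∫ x : ℝ, Real.exp (-x ^ 2 + (k * S ω) * x)) ∂μ := hLHS.symm
        _ = ∫ x : ℝ, (∫ ω, Real.exp (-x ^ 2 + (k * S ω) * x) ∂μ) := hswap
        _ ≤ ∫ x : ℝ, Real.exp (-(1 - u / 2) * x ^ 2) := hRHS
        _ = Real.sqrt (Real.pi / (1 - u / 2)) := hgauss2
        _ ≤ Real.sqrt Real.pi * Real.exp (2 * u) := hsqrt
    exact le_of_mul_le_mul_left hchain (Real.sqrt_pos.2 Real.pi_pos)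
  have hIpos : (0 : ℝ) < ∫ ω, Real.exp (γ * S ω ^ 2) ∂μ := lt_of_lt_of_le one_pos hI1
  have hlog : Real.log (∫ ω, Real.exp (γ * S ω ^ 2) ∂μ) ≤ 2 * u :=
    (Real.log_le_iff_le_exp hIpos).2 hkey
  constructor
  · have : (2 : ℝ) * u = 2 * γ * σ2 := by rw [hu]; ring
    rw [← this]
    exact hlog
  · calc Real.log (∫ ω, Real.exp (γ * S ω ^ 2) ∂μ) ≤ 2 * u := hlog
      _ ≤ 2 := by linarith
end

section
/- Summation-by-parts via a flow: let N, ℓ ∈ ℕ with 2ℓ − 1 < N, let n₁ ∈ ℤ^d, let Φ be any flow on the nearest-neighbor graph of Λ_{2ℓ−1} connecting δ₀ and q_ℓ = p_ℓ * p_ℓ (extended by 0 outside Λ_{2ℓ−1} and regarded inside T_N^d), and let ω̃ = (ω̃_x)_{x∈T_N^d} and ω = (ω_x)_{x∈T_N^d} be any real-valued families indexed by the torus. Then for every K, K Σ_{x∈T_N^d} ω̃_x ( ω_{x+n₁} − Σ_{y∈T_N^d} ω_{x−y+n₁} q_ℓ(−y) ) = K Σ_{j=1}^d Σ_{x∈T_N^d}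 h_x^{ℓ,j} ( ω_x − ω_{x+e_j} ), where h_x^{ℓ,j} = Σ_{y∈Λ_{2ℓ−1}} ω̃_{x−y−n₁} Φ(y, y+e_j). -/
open Finset

/-- The convolution `q_ℓ = p_ℓ * p_ℓ` (supported in `Λ_{2ℓ-1}`). -/
noncomputable def qconv (d ℓ : ℕ) (x : Fin d → ℤ) : ℝ :=
  ∑ y ∈ boxZ d ℓ, punif d ℓ y * punif d ℓ (x - y)

/-- The projection `ℤ^d → T_N^d`. -/
def castT (d N : ℕ) (w : Fin d → ℤ) : Torus d N := fun j => ((w j : ℤ) : ZMod N)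

/-- `q_ℓ` regarded inside `T_N^d`. -/
noncomputable def qT (d N ℓ : ℕ) [NeZero N] (z : Torus d N) : ℝ :=
  ∑ w ∈ boxZ d (2 * ℓ - 1), (if castT d N w = z then qconv d ℓ w else 0)

/-- Summation by parts via a flow (identity (3.3)–(3.4) in the proof of Proposition 3.1):
for any flow `Φ` on `Λ_{2ℓ-1}` connecting `δ₀` and `q_ℓ`, and any families `ω̃`, `ω` on the
torus,
`K Σ_x ω̃_x (ω_{x+n₁} - Σ_y ω_{x-y+n₁} q_ℓ(-y)) = K Σ_j Σ_x h_x^{ℓ,j} (ω_x - ω_{x+e_j})`,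
where `h_x^{ℓ,j} = Σ_{y ∈ Λ_{2ℓ-1}} ω̃_{x-y-n₁} Φ(y, y+e_j)`. -/
theorem summation_by_parts_flow (d N ℓ : ℕ) [NeZero N] (hd : 1 ≤ d) (hℓ : 1 ≤ ℓ)
    (hN : 2 * ℓ - 1 < N) (n₁ : Fin d → ℤ) (K : ℝ)
    (Φ : (Fin d → ℤ) → (Fin d → ℤ) → ℝ)
    (hanti : ∀ w z, Φ w z = - Φ z w)
    (hsupp : ∀ w z, Φ w z ≠ 0 →
      w ∈ boxZ d (2 * ℓ - 1) ∧ z ∈ boxZ d (2 * ℓ - 1) ∧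
        ∃ j : Fin d, z = w + eZ d j ∨ z = w - eZ d j)
    (hdiv : ∀ w : Fin d → ℤ,
      (∑ j : Fin d, (Φ w (w + eZ d j) + Φ w (w - eZ d j)))
        = (if w = 0 then 1 else 0) - qconv d ℓ w)
    (ωtilde ω : Torus d N → ℝ) :
    K * ∑ x : Torus d N,
        ωtilde x * (ω (x + castT d N n₁)
          - ∑ y : Torus d N, ω (x - y + castT d N n₁) * qT d N ℓ (-y))
      = K * ∑ j : Fin d, ∑ x : Torus d N,
          (∑ w ∈ boxZ d (2 * ℓ - 1),
            ωtilde (x - castT d N w - castT d N n₁) * Φ w (w + eZ d j))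
          * (ω x - ω (x + uvec d N j)) := by
  have key :
      ∑ x : Torus d N,
        ωtilde x * (ω (x + castT d N n₁)
          - ∑ y : Torus d N, ω (x - y + castT d N n₁) * qT d N ℓ (-y))
      = ∑ j : Fin d, ∑ x : Torus d N,
          (∑ w ∈ boxZ d (2 * ℓ - 1),
            ωtilde (x - castT d N w - castT d N n₁) * Φ w (w + eZ d j))
          * (ω x - ω (x + uvec d N j)) := by
    set c := castT d N n₁ with hc
    set Λ := boxZ d (2 * ℓ - 1) with hΛ
    have hcast : ∀ v w : Fin d → ℤ, castT d N (v + w) = castT d N v + castT d N w := by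
      intro v w; funext k; simp [castT, Pi.add_apply]
    have hcaste : ∀ j, castT d N (eZ d j) = uvec d N j := by
      intro j; funext k; simp [castT, eZ, uvec]
    have hcast0 : castT d N 0 = 0 := by
      funext k; simp [castT]
    have h0 : (0 : Fin d → ℤ) ∈ Λ := by
      simp only [hΛ, boxZ, Fintype.mem_piFinset]
      intro i
      simp only [Pi.zero_apply, Finset.mem_Icc, le_refl, true_and]
      omega
    -- reindexing lemma
    have hrein : ∀ (j : Fin d) (g : (Fin d → ℤ) → ℝ),
        ∑ w ∈ Λ, g w * Φ w (w - eZ d j)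
          = - ∑ w ∈ Λ, g (w + eZ d j) * Φ w (w + eZ d j) := by
      intro j g
      have h1 : ∑ w ∈ Λ, g w * Φ w (w - eZ d j)
          = ∑ w ∈ Λ.filter (fun w => w - eZ d j ∈ Λ), g w * Φ w (w - eZ d j) := by
        refine (Finset.sum_filter_of_ne ?_).symm
        intro w hw hne
        have : Φ w (w - eZ d j) ≠ 0 := by
          intro h; apply hne; rw [h, mul_zero]
        exact (hsupp w (w - eZ d j) this).2.1
      have h2 : ∑ w ∈ Λ, g (w + eZ d j) * Φ w (w + eZ d j)
          = ∑ w ∈ Λ.filter (fun w => w + eZ d j ∈ Λ), g (w + eZ d j) * Φ w (w + eZ d j) := by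
        refine (Finset.sum_filter_of_ne ?_).symm
        intro w hw hne
        have : Φ w (w + eZ d j) ≠ 0 := by
          intro h; apply hne; rw [h, mul_zero]
        exact (hsupp w (w + eZ d j) this).2.1
      rw [h1, h2, ← Finset.sum_neg_distrib]
      refine Finset.sum_nbij' (fun w => w - eZ d j) (fun w => w + eZ d j) ?_ ?_ ?_ ?_ ?_
      · intro a ha
        simp only [Finset.mem_filter] at ha ⊢
        refine ⟨ha.2, ?_⟩
        have : a - eZ d j + eZ d j = a := by ring
        rw [this]; exact ha.1
      · intro a ha
        simp only [Finset.mem_filter] at ha ⊢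
        refine ⟨ha.2, ?_⟩
        have : a + eZ d j - eZ d j = a := by ring
        rw [this]; exact ha.1
      · intro a _; ring
      · intro a _; ring
      · intro a ha
        have h3 : a - eZ d j + eZ d j = a := by ring
        rw [h3, hanti a (a - eZ d j)]
        ring
    -- convolution term
    have hq : ∀ x : Torus d N,
        ∑ y : Torus d N, ω (x - y + c) * qT d N ℓ (-y)
          = ∑ w ∈ Λ, ω (x + castT d N w + c) * qconv d ℓ w := by
      intro x
      unfold qT
      rw [← hΛ]
      calc ∑ y : Torus d N, ω (x - y + c) *
              ∑ w ∈ Λ, (if castT d N w = -y then qconv d ℓ w else 0)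
          = ∑ y : Torus d N, ∑ w ∈ Λ,
              (if castT d N w = -y then ω (x - y + c) * qconv d ℓ w else 0) := by
            refine Finset.sum_congr rfl fun y _ => ?_
            rw [Finset.mul_sum]
            exact Finset.sum_congr rfl fun w _ => by rw [mul_ite, mul_zero]
        _ = ∑ w ∈ Λ, ∑ y : Torus d N,
              (if castT d N w = -y then ω (x - y + c) * qconv d ℓ w else 0) :=
            Finset.sum_comm
        _ = ∑ w ∈ Λ, ω (x + castT d N w + c) * qconv d ℓ w := by
            refine Finset.sum_congr rfl fun w _ => ?_
            have hcond : ∀ y : Torus d N, (castT d N w = -y) ↔ (y = -castT d N w) := by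
              intro y
              constructor
              · intro h; rw [h]; ring
              · intro h; rw [h]; ring
            calc ∑ y : Torus d N,
                  (if castT d N w = -y then ω (x - y + c) * qconv d ℓ w else 0)
                = ∑ y : Torus d N,
                  (if y = -castT d N w then ω (x - y + c) * qconv d ℓ w else 0) := by
                  refine Finset.sum_congr rfl fun y _ => ?_
                  rw [if_congr (hcond y) rfl rfl]
              _ = ω (x - (-castT d N w) + c) * qconv d ℓ w := by
                  rw [Finset.sum_ite_eq' Finset.univ (-castT d N w)
                    (fun y => ω (x - y + c) * qconv d ℓ w), if_pos (Finset.mem_univ _)]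
              _ = ω (x + castT d N w + c) * qconv d ℓ w := by rw [sub_neg_eq_add]
    -- delta term
    have hδ : ∀ x : Torus d N,
        ω (x + c) = ∑ w ∈ Λ, ω (x + castT d N w + c) * (if w = 0 then 1 else 0) := by
      intro x
      calc ω (x + c)
          = ∑ w ∈ Λ, (if w = 0 then ω (x + castT d N w + c) else 0) := by
            rw [Finset.sum_ite_eq' Λ 0 (fun w => ω (x + castT d N w + c)), if_pos h0,
              hcast0, add_zero]
        _ = ∑ w ∈ Λ, ω (x + castT d N w + c) * (if w = 0 then 1 else 0) := by
            refine Finset.sum_congr rfl fun w _ => ?_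
            by_cases h : w = 0 <;> simp [h]
    -- bracket identity
    have hbr : ∀ x : Torus d N,
        ω (x + c) - ∑ y : Torus d N, ω (x - y + c) * qT d N ℓ (-y)
          = ∑ j : Fin d, ∑ w ∈ Λ,
              Φ w (w + eZ d j) *
                (ω (x + castT d N w + c) - ω (x + castT d N w + uvec d N j + c)) := by
      intro x
      rw [hδ x, hq x, ← Finset.sum_sub_distrib]
      calc ∑ w ∈ Λ, (ω (x + castT d N w + c) * (if w = 0 then 1 else 0)
              - ω (x + castT d N w + c) * qconv d ℓ w)
          = ∑ w ∈ Λ, ω (x + castT d N w + c) * ((if w = 0 then 1 else 0) - qconv d ℓ w) := by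
            refine Finset.sum_congr rfl fun w _ => by ring
        _ = ∑ w ∈ Λ, ω (x + castT d N w + c) *
              ∑ j : Fin d, (Φ w (w + eZ d j) + Φ w (w - eZ d j)) := by
            refine Finset.sum_congr rfl fun w _ => by rw [hdiv w]
        _ = ∑ w ∈ Λ, ∑ j : Fin d,
              (ω (x + castT d N w + c) * Φ w (w + eZ d j)
                + ω (x + castT d N w + c) * Φ w (w - eZ d j)) := by
            refine Finset.sum_congr rfl fun w _ => ?_
            rw [Finset.mul_sum]
            exact Finset.sum_congr rfl fun j _ => by ring
        _ = ∑ j : Fin d, ∑ w ∈ Λ,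
              (ω (x + castT d N w + c) * Φ w (w + eZ d j)
                + ω (x + castT d N w + c) * Φ w (w - eZ d j)) := Finset.sum_comm
        _ = ∑ j : Fin d, ∑ w ∈ Λ,
              Φ w (w + eZ d j) *
                (ω (x + castT d N w + c) - ω (x + castT d N w + uvec d N j + c)) := by
            refine Finset.sum_congr rfl fun j _ => ?_
            rw [Finset.sum_add_distrib,
              hrein j (fun w => ω (x + castT d N w + c))]
            rw [← Finset.sum_neg_distrib, ← Finset.sum_add_distrib]
            refine Finset.sum_congr rfl fun w _ => ?_
            have harg : x + castT d N (w + eZ d j) + c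
                = x + castT d N w + uvec d N j + c := by
              rw [hcast, hcaste]; abel
            rw [harg]
            ring
    -- assemble
    calc ∑ x : Torus d N,
          ωtilde x * (ω (x + c) - ∑ y : Torus d N, ω (x - y + c) * qT d N ℓ (-y))
        = ∑ x : Torus d N, ∑ j : Fin d, ∑ w ∈ Λ,
            ωtilde x * (Φ w (w + eZ d j) *
              (ω (x + castT d N w + c) - ω (x + castT d N w + uvec d N j + c))) := by
          refine Finset.sum_congr rfl fun x _ => ?_
          rw [hbr x, Finset.mul_sum]
          exact Finset.sum_congr rfl fun j _ => Finset.mul_sum _ _ _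
      _ = ∑ j : Fin d, ∑ w ∈ Λ, ∑ x : Torus d N,
            ωtilde x * (Φ w (w + eZ d j) *
              (ω (x + castT d N w + c) - ω (x + castT d N w + uvec d N j + c))) := by
          rw [Finset.sum_comm]
          exact Finset.sum_congr rfl fun j _ => Finset.sum_comm
      _ = ∑ j : Fin d, ∑ w ∈ Λ, ∑ x : Torus d N,
            ωtilde (x - castT d N w - c) * (Φ w (w + eZ d j) * (ω x - ω (x + uvec d N j))) := by
          refine Finset.sum_congr rfl fun j _ => Finset.sum_congr rfl fun w _ => ?_
          refine Fintype.sum_equiv (Equiv.addRight (castT d N w + c)) _ _ fun x => ?_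
          simp only [Equiv.coe_addRight]
          have e1 : x + (castT d N w + c) - castT d N w - c = x := by abel
          have e2 : x + (castT d N w + c) = x + castT d N w + c := by abel
          have e3 : x + castT d N w + c + uvec d N j = x + castT d N w + uvec d N j + c := by
            abel
          rw [e1, e2, e3]
      _ = ∑ j : Fin d, ∑ x : Torus d N,
            (∑ w ∈ Λ, ωtilde (x - castT d N w - c) * Φ w (w + eZ d j))
              * (ω x - ω (x + uvec d N j)) := by
          refine Finset.sum_congr rfl fun j _ => ?_
          rw [Finset.sum_comm]
          refine Finset.sum_congr rfl fun x _ => ?_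
          rw [Finset.sum_mul]
          exact Finset.sum_congr rfl fun w _ => by ring
  rw [key]
end
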